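/- arXiv:1112.2282 — 8 statements merged into one kernel-verified Lean document; each statement's English description precedes it below -/
import Mathlib

section
/- Let ω > 0, x > 0, and let f be continuous on the closed first quadrant minus the origin with constants M > 0, δ < 1 and 0 ≤ d < ω such that |f(z)| ≤ M·|z|^δ·e^{d·Im z} for all z in the closed first quadrant with |z| sufficiently large. Then the integral over the quarter circle of radius R, namely ∫_0^{π/2} e^{iωR e^{iθ}}·(f(R e^{iθ})/(R e^{iθ}−x))·iR e^{iθ} dθ, tends to 0 as R → ∞. -/
open Filter MeasureTheory Set intervalIntegral

lemma exp_neg_integral_bound (k T : ℝ) (hk : 0 < k) :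
    ∫ θ in (0:ℝ)..T, Real.exp (-k * θ) ≤ 1 / k := by
  have hne : (-k) ≠ 0 := by linarith
  have h := intervalIntegral.integral_comp_mul_left (a := (0:ℝ)) (b := T)
      (fun u => Real.exp u) (c := -k) hne
  rw [show (fun θ => Real.exp (-k * θ)) = (fun θ => Real.exp ((-k) * θ)) from rfl]
  rw [h, integral_exp, mul_zero, Real.exp_zero, smul_eq_mul]
  have hE : 0 ≤ Real.exp (-k * T) := (Real.exp_pos _).le
  have heq : (-k)⁻¹ * (Real.exp (-k * T) - 1) = (1 - Real.exp (-k * T)) / k := by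
    field_simp; ring
  rw [heq]
  gcongr
  linarith

/-- Arc-vanishing estimate: the integral over the quarter circle of radius R tends to 0. -/
theorem quarter_circle_integral_tendsto_zero
    (ω x M δ d : ℝ) (f : ℂ → ℂ)
    (hω : 0 < ω) (hx : 0 < x) (hM : 0 < M) (hδ : δ < 1) (hd0 : 0 ≤ d) (hdω : d < ω)
    (hcont : ContinuousOn f ({z : ℂ | 0 ≤ z.re ∧ 0 ≤ z.im} \ {0}))
    (hgrowth : ∃ R₀ : ℝ, ∀ z : ℂ, 0 ≤ z.re → 0 ≤ z.im → R₀ ≤ ‖z‖ →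
      ‖f z‖ ≤ M * ‖z‖ ^ δ * Real.exp (d * z.im)) :
    Tendsto (fun R : ℝ => ∫ θ in (0 : ℝ)..(Real.pi / 2),
        Complex.exp (Complex.I * ω * (R * Complex.exp (Complex.I * θ))) *
          (f (R * Complex.exp (Complex.I * θ)) /
            (R * Complex.exp (Complex.I * θ) - x)) *
          (Complex.I * R * Complex.exp (Complex.I * θ)))
      atTop (nhds 0) := by
  obtain ⟨R₀, hR₀⟩ := hgrowth
  set c := ω - d with hc
  have hcpos : 0 < c := by simp [hc]; linarith
  have hπ := Real.pi_pos
  -- the squeezing bound tends to zero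
  have hbound_to : Tendsto (fun R : ℝ => (M * Real.pi / c) * R ^ (δ - 1)) atTop (nhds 0) := by
    have h1 : Tendsto (fun R : ℝ => R ^ (δ - 1)) atTop (nhds 0) := by
      have := tendsto_rpow_neg_atTop (y := 1 - δ) (by linarith)
      simpa [neg_sub] using this
    simpa using h1.const_mul (M * Real.pi / c)
  refine squeeze_zero_norm' ?_ hbound_to
  filter_upwards [eventually_ge_atTop R₀, eventually_ge_atTop (2 * x), eventually_ge_atTop 1]
    with R hRR₀ hR2x hR1
  have hRpos : (0:ℝ) < R := by linarith
  have hRx2 : R / 2 ≤ R - x := by linarith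
  have hRxpos : 0 < R - x := by linarith
  set k := 2 * c * R / Real.pi with hk
  have hkpos : 0 < k := by positivity
  have hRδ : (0:ℝ) < R ^ δ := Real.rpow_pos_of_pos hRpos δ
  -- norm bound on the integrand
  have key : ‖∫ θ in (0:ℝ)..(Real.pi / 2),
        Complex.exp (Complex.I * ω * (R * Complex.exp (Complex.I * θ))) *
          (f (R * Complex.exp (Complex.I * θ)) /
            (R * Complex.exp (Complex.I * θ) - x)) *
          (Complex.I * R * Complex.exp (Complex.I * θ))‖
      ≤ |∫ θ in (0:ℝ)..(Real.pi / 2), (2 * M * R ^ δ) * Real.exp (-k * θ)| := by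
    apply intervalIntegral.norm_integral_le_abs_of_norm_le
    · rw [ae_restrict_iff' measurableSet_uIoc]
      refine Eventually.of_forall fun θ hθ => ?_
      rw [uIoc_of_le (by positivity)] at hθ
      obtain ⟨hθ0, hθπ⟩ := hθ
      set z : ℂ := (R:ℂ) * Complex.exp (Complex.I * θ) with hz
      have hre : (Complex.exp (Complex.I * (θ:ℂ))).re = Real.cos θ := by
        rw [mul_comm, Complex.exp_ofReal_mul_I_re]
      have him : (Complex.exp (Complex.I * (θ:ℂ))).im = Real.sin θ := by
        rw [mul_comm, Complex.exp_ofReal_mul_I_im]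
      have hzre : z.re = R * Real.cos θ := by simp [hz, Complex.mul_re, hre, him]
      have hzim : z.im = R * Real.sin θ := by simp [hz, Complex.mul_im, hre, him]
      have habs_e : ‖Complex.exp (Complex.I * (θ:ℂ))‖ = 1 := by
        rw [Complex.norm_exp]
        simp [Complex.mul_re]
      have habsz : ‖z‖ = R := by
        rw [hz, norm_mul, habs_e, Complex.norm_real, Real.norm_eq_abs, abs_of_pos hRpos, mul_one]
      have hsin0 : 0 ≤ Real.sin θ := Real.sin_nonneg_of_nonneg_of_le_pi hθ0.le (by linarith)
      have hcos0 : 0 ≤ Real.cos θ := Real.cos_nonneg_of_mem_Icc ⟨by linarith, hθπ⟩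
      -- |f z| bound
      have hfz : ‖f z‖ ≤ M * R ^ δ * Real.exp (d * (R * Real.sin θ)) := by
        have := hR₀ z (by rw [hzre]; positivity) (by rw [hzim]; positivity)
          (by rw [habsz]; exact hRR₀)
        rwa [habsz, hzim] at this
      -- |z - x| lower bound
      have hzx : R - x ≤ ‖z - (x:ℂ)‖ := by
        have := norm_sub_norm_le z (x:ℂ)
        rw [habsz, Complex.norm_real, Real.norm_eq_abs, abs_of_pos hx] at this
        exact this
      have hzxpos : 0 < ‖z - (x:ℂ)‖ := lt_of_lt_of_le hRxpos hzx
      -- exponential factor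
      have hexp1 : ‖Complex.exp (Complex.I * ω * z)‖
          = Real.exp (-(ω * (R * Real.sin θ))) := by
        rw [Complex.norm_exp]
        congr 1
        simp [Complex.mul_re, Complex.mul_im, hzre, hzim]
      -- the last factor
      have hexp3 : ‖Complex.I * (R:ℂ) * Complex.exp (Complex.I * θ)‖ = R := by
        rw [norm_mul, norm_mul, habs_e, Complex.norm_I, Complex.norm_real, Real.norm_eq_abs,
          abs_of_pos hRpos, one_mul, mul_one]
      -- assemble
      rw [norm_mul, norm_mul, norm_div, hexp1, hexp3]
      have hstep1 : ‖f z‖ / ‖z - (x:ℂ)‖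
          ≤ (M * R ^ δ * Real.exp (d * (R * Real.sin θ))) / (R / 2) := by
        apply div_le_div₀ (by positivity) hfz (by positivity) (le_trans hRx2 hzx)
      have hsin : k * θ ≤ c * R * Real.sin θ := by
        have h2 := Real.mul_le_sin hθ0.le hθπ
        have : c * R * (2 / Real.pi * θ) ≤ c * R * Real.sin θ := by
          apply mul_le_mul_of_nonneg_left h2 (by positivity)
        calc k * θ = c * R * (2 / Real.pi * θ) := by rw [hk]; field_simp
          _ ≤ c * R * Real.sin θ := this
      have hexpprod : Real.exp (-(ω * (R * Real.sin θ))) * Real.exp (d * (R * Real.sin θ))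
          = Real.exp (-(c * R * Real.sin θ)) := by
        rw [← Real.exp_add]; congr 1; simp [hc]; ring
      have hexple : Real.exp (-(c * R * Real.sin θ)) ≤ Real.exp (-k * θ) := by
        apply Real.exp_le_exp.2; linarith
      calc Real.exp (-(ω * (R * Real.sin θ))) *
            (‖f z‖ / ‖z - (x:ℂ)‖) * R
          ≤ Real.exp (-(ω * (R * Real.sin θ))) *
            ((M * R ^ δ * Real.exp (d * (R * Real.sin θ))) / (R / 2)) * R := by
            apply mul_le_mul_of_nonneg_right ?_ hRpos.le
            exact mul_le_mul_of_nonneg_left hstep1 (Real.exp_pos _).le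
        _ = (2 * M * R ^ δ) * (Real.exp (-(ω * (R * Real.sin θ))) *
              Real.exp (d * (R * Real.sin θ))) := by field_simp
        _ = (2 * M * R ^ δ) * Real.exp (-(c * R * Real.sin θ)) := by rw [hexpprod]
        _ ≤ (2 * M * R ^ δ) * Real.exp (-k * θ) := by
            apply mul_le_mul_of_nonneg_left hexple (by positivity)
    · apply Continuous.intervalIntegrable
      continuity
  refine key.trans ?_
  have hint : ∫ θ in (0:ℝ)..(Real.pi / 2), (2 * M * R ^ δ) * Real.exp (-k * θ)
      = (2 * M * R ^ δ) * ∫ θ in (0:ℝ)..(Real.pi / 2), Real.exp (-k * θ) := by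
    rw [intervalIntegral.integral_const_mul]
  have hintnn : 0 ≤ ∫ θ in (0:ℝ)..(Real.pi / 2), Real.exp (-k * θ) := by
    apply intervalIntegral.integral_nonneg (by positivity)
    intro u _; exact (Real.exp_pos _).le
  rw [hint, abs_of_nonneg (by positivity)]
  have hle := exp_neg_integral_bound k (Real.pi / 2) hkpos
  calc (2 * M * R ^ δ) * ∫ θ in (0:ℝ)..(Real.pi / 2), Real.exp (-k * θ)
      ≤ (2 * M * R ^ δ) * (1 / k) := by
        apply mul_le_mul_of_nonneg_left hle (by positivity)
    _ = (M * Real.pi / c) * R ^ (δ - 1) := by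
        rw [Real.rpow_sub hRpos, Real.rpow_one, hk]
        field_simp
end

section
/- Let ω > 0, 0 < α < 1, and let f : (0,∞) → ℂ be locally integrable with a_0 ∈ ℂ such that f(t) − a_0·t^{−α} = O(t^{1−α}) as t → 0+ and such that the improper integral ∫_0^∞ e^{iωt}·(f(t) − a_0 t^{−α})/t dt converges. Then the Hadamard finite-part integral lim_{ε→0+} ( lim_{R→∞} ∫_ε^R e^{iωt} f(t)/t dt − a_0/(α·ε^α) ) exists and equals (e^{iπ(2−α)/2}·ω^α/α)·Γ(1−α)·a_0 + ∫_0^∞ e^{iωt}·(f(t) − a_0 t^{−α})/t dt. -/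
open Filter MeasureTheory Set intervalIntegral Asymptotics Complex

noncomputable section HFP

namespace HFPaux

lemma norm_exp_sub_one_le' {w : ℂ} (hw : w.re ≤ 0) : ‖Complex.exp w - 1‖ ≤ ‖w‖ := by
  have key : Complex.exp w - 1 = ∫ s in (0:ℝ)..1, w * Complex.exp (s * w) := by
    have h : ∀ s ∈ Set.uIcc (0:ℝ) 1, HasDerivAt (fun u : ℝ => Complex.exp (u * w))
        (w * Complex.exp (s * w)) s := by
      intro s _
      have h1 : HasDerivAt (fun u : ℝ => (u : ℂ) * w) w s := by
        simpa using (Complex.ofRealCLM.hasDerivAt (x := s)).mul_const w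
      simpa [mul_comm] using h1.cexp
    have hi : IntervalIntegrable (fun s : ℝ => w * Complex.exp (s * w)) volume 0 1 :=
      Continuous.intervalIntegrable (by continuity) 0 1
    have h2 := intervalIntegral.integral_eq_sub_of_hasDerivAt h hi
    rw [h2]
    norm_num
  rw [key]
  have hb : ∀ s ∈ Set.uIoc (0:ℝ) 1, ‖w * Complex.exp (s * w)‖ ≤ ‖w‖ := by
    intro s hs
    rw [Set.uIoc_of_le zero_le_one, mem_Ioc] at hs
    have h1 : ‖Complex.exp ((s:ℂ) * w)‖ ≤ 1 := by
      rw [ Complex.norm_exp, Real.exp_le_one_iff]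
      have : ((s:ℂ) * w).re = s * w.re := by simp [Complex.mul_re]
      rw [this]
      exact mul_nonpos_of_nonneg_of_nonpos hs.1.le hw
    calc ‖w * Complex.exp (s * w)‖ = ‖w‖ * ‖Complex.exp ((s:ℂ) * w)‖ := by rw [norm_mul]
    _ ≤ ‖w‖ * 1 := by gcongr
    _ = ‖w‖ := mul_one _
  have := intervalIntegral.norm_integral_le_of_norm_le_const hb
  simpa using this

lemma norm_exp_sub_one_le_two {w : ℂ} (hw : w.re ≤ 0) : ‖Complex.exp w - 1‖ ≤ 2 := by
  calc ‖Complex.exp w - 1‖ ≤ ‖Complex.exp w‖ + ‖(1:ℂ)‖ := norm_sub_le _ _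
  _ ≤ 1 + 1 := by
      rw [ Complex.norm_exp]
      gcongr
      · rw [Real.exp_le_one_iff]; exact hw
      · simp
  _ = 2 := by norm_num

lemma rpow_exp_integrable {s c : ℝ} (hs : -1 < s) (hc : 0 < c) :
    IntegrableOn (fun t : ℝ => t ^ s * Real.exp (-(c * t))) (Ioi 0) := by
  have h0 : IntegrableOn (fun x : ℝ => Real.exp (-x) * x ^ (s + 1 - 1)) (Ioi 0) :=
    Real.GammaIntegral_convergent (by linarith)
  have h1 : IntegrableOn (fun x : ℝ => Real.exp (-(c * x)) * (c * x) ^ (s + 1 - 1)) (Ioi 0) := by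
    have h2 := (integrableOn_Ioi_comp_mul_left_iff
      (fun x : ℝ => Real.exp (-x) * x ^ (s + 1 - 1)) 0 hc).mpr (by simpa using h0)
    simpa using h2
  have h3 : IntegrableOn (fun x : ℝ => (c ^ s)⁻¹ * (Real.exp (-(c * x)) * (c * x) ^ (s + 1 - 1)))
      (Ioi 0) := h1.const_mul _
  refine h3.congr_fun (fun x hx => ?_) measurableSet_Ioi
  rw [mem_Ioi] at hx
  have hcs : (0:ℝ) < c ^ s := Real.rpow_pos_of_pos hc s
  dsimp only
  rw [add_sub_cancel_right, Real.mul_rpow hc.le hx.le]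
  field_simp

lemma contOn_aux (z : ℂ) (s : ℝ) :
    ContinuousOn (fun t : ℝ => ((t ^ s : ℝ) : ℂ) * Complex.exp (-(z * t))) (Ioi 0) := by
  apply ContinuousOn.mul
  · exact Complex.continuous_ofReal.comp_continuousOn
      (continuousOn_id.rpow_const (fun x hx => Or.inl (ne_of_gt hx)))
  · exact (Complex.continuous_exp.comp
      ((continuous_const.mul Complex.continuous_ofReal).neg)).continuousOn

lemma norm_integrand_eq {z : ℂ} {s t : ℝ} (ht : 0 < t) :
    ‖((t ^ s : ℝ) : ℂ) * Complex.exp (-(z * t))‖ = t ^ s * Real.exp (-(z.re * t)) := by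
  rw [norm_mul, Complex.norm_real, Real.norm_of_nonneg (Real.rpow_nonneg ht.le s),
     Complex.norm_exp]
  congr 2
  simp [Complex.mul_re]

lemma int_main {z : ℂ} {s : ℝ} (hs : -1 < s) (hz : 0 < z.re) :
    IntegrableOn (fun t : ℝ => ((t ^ s : ℝ) : ℂ) * Complex.exp (-(z * t))) (Ioi 0) := by
  have hb := rpow_exp_integrable hs hz
  refine hb.mono' ((contOn_aux z s).aestronglyMeasurable measurableSet_Ioi) ?_
  filter_upwards [ae_restrict_mem measurableSet_Ioi] with t ht
  rw [norm_integrand_eq ht]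


def Phi (α : ℝ) (z : ℂ) : ℂ :=
  ∫ t in Ioi (0:ℝ), ((t ^ (-α) : ℝ) : ℂ) * Complex.exp (-(z * t))

lemma Phi_one {α : ℝ} (hα1 : α < 1) : Phi α 1 = Complex.Gamma (1 - α) := by
  have ha : 0 < (1 - (α:ℂ)).re := by simp [hα1, Complex.sub_re]
  have h := Complex.integral_cpow_mul_exp_neg_mul_Ioi ha one_pos
  rw [Phi]
  have heq : EqOn (fun t : ℝ => ((t ^ (-α) : ℝ) : ℂ) * Complex.exp (-((1:ℂ) * t)))
      (fun t : ℝ => (t:ℂ) ^ ((1 - (α:ℂ)) - 1) * Complex.exp (-((1:ℝ) * (t:ℂ)))) (Ioi 0) := by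
    intro t ht
    rw [mem_Ioi] at ht
    simp only
    rw [Complex.ofReal_cpow ht.le]
    norm_num
  rw [setIntegral_congr_fun measurableSet_Ioi heq, h]
  norm_num

set_option maxHeartbeats 1000000 in
lemma Phi_hasDeriv {α : ℝ} (hα0 : 0 < α) (hα1 : α < 1) {z : ℂ} (hz : 0 < z.re) :
    HasDerivAt (Phi α)
      (∫ t in Ioi (0:ℝ), ((t ^ (-α) : ℝ) : ℂ) * (Complex.exp (-(z * t)) * (-(t:ℂ)))) z := by
  have hna : (-1:ℝ) < -α := by linarith
  have hmeas : ∀ w : ℂ, AEStronglyMeasurable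
      (fun t : ℝ => ((t ^ (-α) : ℝ) : ℂ) * Complex.exp (-(w * t))) (volume.restrict (Ioi 0)) :=
    fun w => (contOn_aux w (-α)).aestronglyMeasurable measurableSet_Ioi
  have hmeas' : AEStronglyMeasurable
      (fun t : ℝ => ((t ^ (-α) : ℝ) : ℂ) * (Complex.exp (-(z * t)) * (-(t:ℂ))))
      (volume.restrict (Ioi 0)) := by
    refine ContinuousOn.aestronglyMeasurable ?_ measurableSet_Ioi
    refine ContinuousOn.congr (((contOn_aux z (-α)).mul
      (Continuous.continuousOn (Complex.continuous_ofReal.neg : Continuous fun t : ℝ => (-(t:ℂ)))))) ?_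
    intro t _; simp only [Pi.mul_apply, Pi.neg_apply, Function.comp_apply]; ring
  have key := _root_.hasDerivAt_integral_of_dominated_loc_of_deriv_le
    (F := fun w (t : ℝ) => ((t ^ (-α) : ℝ) : ℂ) * Complex.exp (-(w * t)))
    (F' := fun w (t : ℝ) => ((t ^ (-α) : ℝ) : ℂ) * (Complex.exp (-(w * t)) * (-(t:ℂ))))
    (x₀ := z) (s := Metric.ball z (z.re / 2))
    (bound := fun t => t ^ (1 - α) * Real.exp (-(z.re / 2 * t)))
    (Metric.ball_mem_nhds z (half_pos hz)) (Eventually.of_forall hmeas) (int_main hna hz) hmeas' ?_ ?_ ?_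
  · exact key.2
  · -- bound
    filter_upwards [ae_restrict_mem measurableSet_Ioi] with t ht w hw
    rw [mem_Ioi] at ht
    have hwre : z.re / 2 ≤ w.re := by
      have h1 : |w.re - z.re| ≤ ‖w - z‖ := by
        simpa using Complex.abs_re_le_norm (w - z)
      rw [Metric.mem_ball, dist_eq_norm] at hw
      have := abs_le.mp (h1.trans hw.le)
      linarith [this.1]
    have hnorm : ‖((t ^ (-α) : ℝ) : ℂ) * (Complex.exp (-(w * t)) * (-(t:ℂ)))‖
        = t ^ (-α) * (Real.exp (-(w.re * t)) * t) := by
      rw [norm_mul, norm_mul, norm_neg, Complex.norm_real, Complex.norm_real,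
        Real.norm_of_nonneg (Real.rpow_nonneg ht.le _), Real.norm_of_nonneg ht.le,
         Complex.norm_exp]
      congr 3
      simp [Complex.mul_re]
    rw [hnorm]
    have h2 : t ^ (-α) * (Real.exp (-(w.re * t)) * t) = t ^ (1-α) * Real.exp (-(w.re * t)) := by
      rw [show (1:ℝ) - α = -α + 1 by ring, Real.rpow_add ht, Real.rpow_one]
      ring
    rw [h2]
    have hee : Real.exp (-(w.re * t)) ≤ Real.exp (-(z.re / 2 * t)) :=
      Real.exp_le_exp.mpr (by nlinarith)
    exact mul_le_mul_of_nonneg_left hee (Real.rpow_nonneg ht.le _)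
  · exact rpow_exp_integrable (by linarith) (half_pos hz)
  · -- differentiability
    filter_upwards [ae_restrict_mem measurableSet_Ioi] with t ht w hw
    have hi : HasDerivAt (fun u : ℂ => -(u * (t:ℂ))) (-(t:ℂ)) w := (hasDerivAt_mul_const _).neg
    exact (hi.cexp).const_mul _

lemma ibp1 {α : ℝ} (hα0 : 0 < α) (hα1 : α < 1) {z : ℂ} (hz : 0 < z.re) :
    z * ∫ t in Ioi (0:ℝ), ((t ^ (1 - α) : ℝ) : ℂ) * Complex.exp (-(z * t))
      = (1 - (α:ℂ)) * Phi α z := by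
  set w : ℝ → ℂ := fun t => ((t ^ (1-α) : ℝ) : ℂ) * Complex.exp (-(z * t)) with hwdef
  set F' : ℝ → ℂ := fun t => (((1-α) * t ^ (-α) : ℝ) : ℂ) * Complex.exp (-(z * t))
      + ((t ^ (1-α) : ℝ) : ℂ) * (Complex.exp (-(z * t)) * (-z)) with hF'def
  have hderiv : ∀ t ∈ Ioi (0:ℝ), HasDerivAt w (F' t) t := by
    intro t ht
    rw [mem_Ioi] at ht
    have h1 : HasDerivAt (fun u : ℝ => u ^ (1-α)) ((1-α) * t ^ (1-α-1)) t :=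
      Real.hasDerivAt_rpow_const (Or.inl (ne_of_gt ht))
    rw [show (1:ℝ)-α-1 = -α by ring] at h1
    have h1' := h1.ofReal_comp
    have h2 : HasDerivAt (fun u : ℝ => Complex.exp (-(z * u))) (Complex.exp (-(z*t)) * (-z)) t := by
      have hi : HasDerivAt (fun u : ℝ => -(z * (u:ℂ))) (-z) t := by
        simpa [Pi.neg_def] using ((Complex.ofRealCLM.hasDerivAt (x := t)).const_mul z).neg
      exact hi.cexp
    have h3 := h1'.mul h2
    simpa [hwdef, hF'def, Complex.ofReal_mul, Pi.mul_def] using h3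
  have hcont : ContinuousWithinAt w (Ici (0:ℝ)) 0 := by
    have hw0 : w 0 = 0 := by
      simp [hwdef, Real.zero_rpow (by linarith : (1:ℝ)-α ≠ 0)]
    rw [ContinuousWithinAt, hw0]
    have hg : Tendsto (fun t : ℝ => t ^ (1-α)) (nhdsWithin 0 (Ici 0)) (nhds 0) := by
      have hc := (Real.continuousAt_rpow_const 0 (1-α) (Or.inr (by linarith))).tendsto
      rw [Real.zero_rpow (by linarith : (1:ℝ)-α ≠ 0)] at hc
      exact hc.mono_left nhdsWithin_le_nhds
    refine squeeze_zero_norm' ?_ hg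
    filter_upwards [self_mem_nhdsWithin] with t ht
    rw [mem_Ici] at ht
    rw [hwdef]
    simp only
    rw [norm_mul, Complex.norm_real, Real.norm_of_nonneg (Real.rpow_nonneg ht _),
       Complex.norm_exp]
    nth_rewrite 2 [← mul_one (t ^ (1-α))]
    gcongr
    rw [Real.exp_le_one_iff]
    have : (-(z * t)).re = -(z.re * t) := by simp [Complex.mul_re]
    rw [this]
    simp only [neg_nonpos]
    positivity
  have htop : Tendsto w atTop (nhds 0) := by
    refine squeeze_zero_norm' ?_ (tendsto_rpow_mul_exp_neg_mul_atTop_nhds_zero (1-α) z.re hz)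
    filter_upwards [eventually_gt_atTop (0:ℝ)] with t ht
    rw [hwdef]
    simp only
    rw [norm_mul, Complex.norm_real, Real.norm_of_nonneg (Real.rpow_nonneg ht.le _),
       Complex.norm_exp]
    apply le_of_eq
    congr 2
    simp only [Complex.neg_re, Complex.mul_re, Complex.ofReal_re, Complex.ofReal_im]
    ring
  have hint1 : IntegrableOn (fun t : ℝ => (((1-α) * t ^ (-α) : ℝ) : ℂ)
      * Complex.exp (-(z * t))) (Ioi 0) := by
    have hbase : IntegrableOn (fun t : ℝ => (((1-α:ℝ)) : ℂ) * (((t ^ (-α) : ℝ) : ℂ)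
        * Complex.exp (-(z * t)))) (Ioi 0) :=
      (int_main (by linarith : (-1:ℝ) < -α) hz).const_mul _
    refine hbase.congr_fun (fun t ht => ?_) measurableSet_Ioi
    push_cast
    try ring
  have hint2 : IntegrableOn (fun t : ℝ => ((t ^ (1-α) : ℝ) : ℂ)
      * (Complex.exp (-(z * t)) * (-z))) (Ioi 0) := by
    have hbase : IntegrableOn (fun t : ℝ => (((t ^ (1-α) : ℝ) : ℂ)
        * Complex.exp (-(z * t))) * (-z)) (Ioi 0) :=
      (int_main (by linarith : (-1:ℝ) < 1-α) hz).mul_const _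
    refine hbase.congr_fun (fun t ht => ?_) measurableSet_Ioi
    ring
  have hintF : IntegrableOn F' (Ioi 0) := hint1.add hint2
  have key := MeasureTheory.integral_Ioi_of_hasDerivAt_of_tendsto hcont hderiv hintF htop
  have hw0 : w 0 = 0 := by
    simp [hwdef, Real.zero_rpow (by linarith : (1:ℝ)-α ≠ 0)]
  rw [hw0, sub_zero] at key
  -- key : ∫ t in Ioi 0, F' t = 0
  have hsplit : ∫ t in Ioi (0:ℝ), F' t
      = ((1:ℂ) - α) * Phi α z
        + (∫ t in Ioi (0:ℝ), ((t ^ (1-α) : ℝ) : ℂ) * Complex.exp (-(z * t))) * (-z) := by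
    rw [hF'def]
    rw [MeasureTheory.integral_add hint1 hint2]
    congr 1
    · rw [Phi, ← MeasureTheory.integral_const_mul]
      refine setIntegral_congr_fun measurableSet_Ioi (fun t ht => ?_)
      push_cast
      ring
    · rw [← MeasureTheory.integral_mul_const]
      refine setIntegral_congr_fun measurableSet_Ioi (fun t ht => ?_)
      ring
  rw [hsplit] at key
  linear_combination -key

lemma Phi_eq {α : ℝ} (hα0 : 0 < α) (hα1 : α < 1) {z : ℂ} (hz : 0 < z.re) :
    Phi α z = Complex.Gamma (1 - α) * z ^ ((α:ℂ) - 1) := by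
  set U : Set ℂ := {w : ℂ | 0 < w.re} with hU
  have hUopen : IsOpen U := isOpen_lt continuous_const Complex.continuous_re
  have hUconvex : Convex ℝ U := convex_halfSpace_re_gt 0
  set Ψ : ℂ → ℂ := fun w => Phi α w * w ^ ((1:ℂ) - α) with hΨ
  have hPsideriv : ∀ w ∈ U, HasDerivAt Ψ 0 w := by
    intro w hw
    have hw' : 0 < w.re := hw
    have hw0 : w ≠ 0 := by
      intro h; rw [h] at hw'; simp at hw'
    have hD := Phi_hasDeriv hα0 hα1 hw'
    have hderivval : (∫ t in Ioi (0:ℝ), ((t ^ (-α) : ℝ) : ℂ) * (Complex.exp (-(w * t)) * (-(t:ℂ))))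
        = -((1 - (α:ℂ))/w * Phi α w) := by
      have h1 : (∫ t in Ioi (0:ℝ), ((t ^ (-α) : ℝ) : ℂ) * (Complex.exp (-(w * t)) * (-(t:ℂ))))
          = -(∫ t in Ioi (0:ℝ), ((t ^ (1-α) : ℝ) : ℂ) * Complex.exp (-(w * t))) := by
        rw [← MeasureTheory.integral_neg]
        refine setIntegral_congr_fun measurableSet_Ioi (fun t ht => ?_)
        rw [mem_Ioi] at ht
        rw [show (1:ℝ) - α = -α + 1 by ring, Real.rpow_add ht, Real.rpow_one]
        push_cast
        ring
      have h2 := ibp1 hα0 hα1 hw'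
      have h3 : (∫ t in Ioi (0:ℝ), ((t ^ (1-α) : ℝ) : ℂ) * Complex.exp (-(w * t)))
          = (1 - (α:ℂ)) * Phi α w / w := by
        rw [eq_div_iff hw0]
        linear_combination h2
      rw [h1, h3]
      ring
    rw [hderivval] at hD
    have hcp : HasDerivAt (fun u : ℂ => u ^ ((1:ℂ) - α)) (((1:ℂ)-α) * w ^ ((1:ℂ) - α - 1)) w := by
      have := (hasDerivAt_id w).cpow_const (c := (1:ℂ) - α) (Or.inl hw')
      simpa using this
    have hmul := hD.mul hcp
    have : -((1 - (α:ℂ))/w * Phi α w) * w ^ ((1:ℂ) - α)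
        + Phi α w * (((1:ℂ)-α) * w ^ ((1:ℂ) - α - 1)) = 0 := by
      have hpow : w ^ ((1:ℂ) - α) = w * w ^ ((1:ℂ) - α - 1) := by
        have hh := Complex.cpow_add 1 ((1:ℂ) - (α:ℂ) - 1) hw0
        rw [Complex.cpow_one] at hh
        rw [show (1:ℂ) + ((1:ℂ) - (α:ℂ) - 1) = (1:ℂ) - (α:ℂ) by ring] at hh
        exact hh
      rw [hpow]
      field_simp
      ring
    rw [this] at hmul
    exact hmul
  have hconst : Ψ z = Ψ 1 := by
    refine hUconvex.is_const_of_fderivWithin_eq_zero (𝕜 := ℂ)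
      (fun w hw => ((hPsideriv w hw).differentiableAt.differentiableWithinAt)) ?_ hz ?_
    · intro w hw
      rw [fderivWithin_of_isOpen hUopen hw]
      have h0 : HasFDerivAt Ψ ((1 : ℂ →L[ℂ] ℂ).smulRight 0) w := (hPsideriv w hw).hasFDerivAt
      rw [h0.fderiv]
      ext u
      simp
    · show (0:ℝ) < (1:ℂ).re
      simp
  have hΨ1 : Ψ 1 = Complex.Gamma (1 - α) := by
    rw [hΨ]
    simp only
    rw [Phi_one hα1, Complex.one_cpow, mul_one]
  have hz0 : z ≠ 0 := by
    intro h; rw [h] at hz; simp at hz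
  have hfin : Phi α z * z ^ ((1:ℂ) - α) = Complex.Gamma (1 - α) := by
    rw [← hΨ1, ← hconst]
  have hpow_ne : z ^ ((1:ℂ) - α) ≠ 0 := by
    simp only [Ne, Complex.cpow_eq_zero_iff, not_and_or]
    left
    exact hz0
  rw [show ((α:ℂ) - 1) = -((1:ℂ) - (α:ℂ)) by ring, Complex.cpow_neg]
  field_simp
  linear_combination hfin


lemma contOn2 (z : ℂ) (s : ℝ) :
    ContinuousOn (fun t : ℝ => (Complex.exp (-(z * t)) - 1) * ((t ^ s : ℝ) : ℂ)) (Ioi 0) := by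
  apply ContinuousOn.mul
  · exact ((Complex.continuous_exp.comp
      ((continuous_const.mul Complex.continuous_ofReal).neg)).sub continuous_const).continuousOn
  · exact Complex.continuous_ofReal.comp_continuousOn
      (continuousOn_id.rpow_const (fun x hx => Or.inl (ne_of_gt hx)))

lemma re_neg_mul_nonpos {z : ℂ} {t : ℝ} (hz : 0 ≤ z.re) (ht : 0 ≤ t) :
    (-(z * t)).re ≤ 0 := by
  have : (-(z * (t:ℂ))).re = -(z.re * t) := by simp [Complex.mul_re]
  rw [this]
  simp only [neg_nonpos]
  positivity

lemma int_bdry {α : ℝ} (hα0 : 0 < α) (hα1 : α < 1) {z : ℂ} (hz : 0 ≤ z.re) :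
    IntegrableOn (fun t : ℝ => (Complex.exp (-(z * t)) - 1) * ((t ^ (-α - 1) : ℝ) : ℂ))
      (Ioi 0) := by
  have h1 : IntegrableOn (fun t : ℝ => (Complex.exp (-(z * t)) - 1) * ((t ^ (-α - 1) : ℝ) : ℂ))
      (Ioc 0 1) := by
    have hg : IntegrableOn (fun t : ℝ => ‖z‖ * t ^ (-α)) (Ioc 0 1) :=
      ((intervalIntegral.intervalIntegrable_rpow' (by linarith : (-1:ℝ) < -α)).1).const_mul _
    refine hg.mono' (((contOn2 z (-α-1)).mono Ioc_subset_Ioi_self).aestronglyMeasurable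
      measurableSet_Ioc) ?_
    filter_upwards [ae_restrict_mem measurableSet_Ioc] with t ht
    obtain ⟨ht0, ht1⟩ := ht
    rw [norm_mul, Complex.norm_real, Real.norm_of_nonneg (Real.rpow_nonneg ht0.le _)]
    have hb : ‖Complex.exp (-(z * t)) - 1‖ ≤ ‖z * (t:ℂ)‖ := by
      have := norm_exp_sub_one_le' (re_neg_mul_nonpos hz ht0.le)
      simpa using this
    calc ‖Complex.exp (-(z * t)) - 1‖ * t ^ (-α - 1)
        ≤ ‖z * (t:ℂ)‖ * t ^ (-α - 1) := by gcongr
      _ = ‖z‖ * (t * t ^ (-α - 1)) := by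
          rw [norm_mul, Complex.norm_real, Real.norm_of_nonneg ht0.le]; ring
      _ = ‖z‖ * t ^ (-α) := by
          rw [show t * t ^ (-α-1) = t ^ (1:ℝ) * t ^ (-α-1) by rw [Real.rpow_one],
            ← Real.rpow_add ht0]
          norm_num
  have h2 : IntegrableOn (fun t : ℝ => (Complex.exp (-(z * t)) - 1) * ((t ^ (-α - 1) : ℝ) : ℂ))
      (Ioi 1) := by
    have hg : IntegrableOn (fun t : ℝ => 2 * t ^ (-α - 1)) (Ioi 1) :=
      (integrableOn_Ioi_rpow_of_lt (by linarith) one_pos).const_mul _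
    refine hg.mono' (((contOn2 z (-α-1)).mono (Ioi_subset_Ioi zero_le_one)).aestronglyMeasurable
      measurableSet_Ioi) ?_
    filter_upwards [ae_restrict_mem measurableSet_Ioi] with t ht
    rw [mem_Ioi] at ht
    have ht0 : (0:ℝ) < t := lt_trans one_pos ht
    rw [norm_mul, Complex.norm_real, Real.norm_of_nonneg (Real.rpow_nonneg ht0.le _)]
    gcongr
    exact norm_exp_sub_one_le_two (re_neg_mul_nonpos hz ht0.le)
  have := h1.union h2
  rwa [Ioc_union_Ioi_eq_Ioi zero_le_one] at this

lemma F_eq {α : ℝ} (hα0 : 0 < α) (hα1 : α < 1) {z : ℂ} (hz : 0 < z.re) :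
    ∫ t in Ioi (0:ℝ), (Complex.exp (-(z * t)) - 1) * ((t ^ (-α - 1) : ℝ) : ℂ)
      = -(Complex.Gamma (1 - α) / α) * z ^ (α:ℂ) := by
  have hα0' : (α:ℂ) ≠ 0 := by exact_mod_cast hα0.ne'
  have hnormc : ‖(-1/(α:ℂ))‖ = 1/α := by
    rw [norm_div, norm_neg, norm_one]
    congr 1
    rw [Complex.norm_real]
    exact abs_of_pos hα0
  set w2 : ℝ → ℂ := fun t => (Complex.exp (-(z * t)) - 1) * ((t ^ (-α) : ℝ) : ℂ) * (-1/(α:ℂ))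
    with hw2def
  set F2 : ℝ → ℂ := fun t => ((Complex.exp (-(z * t)) * (-z)) * ((t ^ (-α) : ℝ) : ℂ)
      + (Complex.exp (-(z * t)) - 1) * (((-α) * t ^ (-α-1) : ℝ) : ℂ)) * (-1/(α:ℂ)) with hF2def
  have hderiv : ∀ t ∈ Ioi (0:ℝ), HasDerivAt w2 (F2 t) t := by
    intro t ht
    rw [mem_Ioi] at ht
    have h2 : HasDerivAt (fun u : ℝ => Complex.exp (-(z * u)) - 1)
        (Complex.exp (-(z*t)) * (-z)) t := by
      have hi : HasDerivAt (fun u : ℝ => -(z * (u:ℂ))) (-z) t := by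
        simpa [Pi.neg_def] using ((Complex.ofRealCLM.hasDerivAt (x := t)).const_mul z).neg
      exact hi.cexp.sub_const 1
    have h1 : HasDerivAt (fun u : ℝ => ((u ^ (-α) : ℝ) : ℂ)) ((((-α) * t ^ (-α-1) : ℝ)) : ℂ) t :=
      (Real.hasDerivAt_rpow_const (p := -α) (Or.inl (ne_of_gt ht))).ofReal_comp
    exact (h2.mul h1).mul_const (-1/(α:ℂ))
  have hw0 : w2 0 = 0 := by
    simp [hw2def, Real.zero_rpow (by linarith : -α ≠ 0)]
  have hcont : ContinuousWithinAt w2 (Ici (0:ℝ)) 0 := by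
    rw [ContinuousWithinAt, hw0]
    have hg : Tendsto (fun t : ℝ => (‖z‖ / α) * t ^ (1-α)) (nhdsWithin 0 (Ici 0)) (nhds 0) := by
      have hc := (Real.continuousAt_rpow_const 0 (1-α) (Or.inr (by linarith))).tendsto
      rw [Real.zero_rpow (by linarith : (1:ℝ)-α ≠ 0)] at hc
      have hc2 : Tendsto (fun t : ℝ => t ^ (1-α)) (nhdsWithin (0:ℝ) (Ici 0)) (nhds 0) :=
        hc.mono_left nhdsWithin_le_nhds
      simpa using hc2.const_mul (‖z‖ / α)
    refine squeeze_zero_norm' ?_ hg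
    filter_upwards [self_mem_nhdsWithin] with t ht
    rw [mem_Ici] at ht
    rcases eq_or_lt_of_le ht with h | h
    · rw [hw2def]
      simp [← h, Real.zero_rpow (by linarith : -α ≠ 0),
        Real.zero_rpow (by linarith : (1:ℝ)-α ≠ 0)]
    · rw [hw2def]
      simp only
      rw [norm_mul, norm_mul, Complex.norm_real,
        Real.norm_of_nonneg (Real.rpow_nonneg h.le _), hnormc]
      have hb : ‖Complex.exp (-(z * t)) - 1‖ ≤ ‖z‖ * t := by
        have h3 := norm_exp_sub_one_le' (re_neg_mul_nonpos hz.le h.le)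
        calc ‖Complex.exp (-(z * t)) - 1‖ ≤ ‖(-(z * (t:ℂ)))‖ := h3
          _ = ‖z‖ * t := by
              rw [norm_neg, norm_mul, Complex.norm_real, Real.norm_of_nonneg h.le]
      have ht1 : t * t ^ (-α) = t ^ (1 - α) := by
        rw [show (1:ℝ) - α = 1 + -α by ring, Real.rpow_add h, Real.rpow_one]
      calc ‖Complex.exp (-(z * t)) - 1‖ * t ^ (-α) * (1 / α)
          ≤ ‖z‖ * t * t ^ (-α) * (1 / α) := by gcongr
        _ = ‖z‖ / α * (t * t ^ (-α)) := by ring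
        _ = ‖z‖ / α * t ^ (1 - α) := by rw [ht1]
  have htop : Tendsto w2 atTop (nhds 0) := by
    have hg : Tendsto (fun t : ℝ => (2/α) * t ^ (-α)) atTop (nhds 0) := by
      simpa using (tendsto_rpow_neg_atTop hα0).const_mul (2/α)
    refine squeeze_zero_norm' ?_ hg
    filter_upwards [eventually_gt_atTop (0:ℝ)] with t ht
    rw [hw2def]
    simp only
    rw [norm_mul, norm_mul, Complex.norm_real,
      Real.norm_of_nonneg (Real.rpow_nonneg ht.le _), hnormc]
    have hb := norm_exp_sub_one_le_two (re_neg_mul_nonpos hz.le ht.le)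
    calc ‖Complex.exp (-(z * t)) - 1‖ * t ^ (-α) * (1 / α)
        ≤ 2 * t ^ (-α) * (1 / α) := by gcongr
      _ = 2 / α * t ^ (-α) := by ring
  have hint1 : IntegrableOn (fun t : ℝ => (Complex.exp (-(z*t)) * (-z))
      * ((t ^ (-α) : ℝ) : ℂ)) (Ioi 0) := by
    have hbase : IntegrableOn (fun t : ℝ => (((t ^ (-α) : ℝ) : ℂ)
        * Complex.exp (-(z*t))) * (-z)) (Ioi 0) :=
      (int_main (by linarith : (-1:ℝ) < -α) hz).mul_const _
    exact hbase.congr_fun (fun t ht => by ring) measurableSet_Ioi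
  have hint2 : IntegrableOn (fun t : ℝ => (Complex.exp (-(z*t)) - 1)
      * (((-α) * t ^ (-α-1) : ℝ) : ℂ)) (Ioi 0) := by
    have hbase : IntegrableOn (fun t : ℝ => ((Complex.exp (-(z*t)) - 1)
        * ((t ^ (-α-1) : ℝ) : ℂ)) * ((-α : ℝ) : ℂ)) (Ioi 0) :=
      (int_bdry hα0 hα1 hz.le).mul_const _
    refine hbase.congr_fun (fun t ht => ?_) measurableSet_Ioi
    push_cast
    ring
  have hintF : IntegrableOn F2 (Ioi 0) := (hint1.add hint2).mul_const _
  have key := MeasureTheory.integral_Ioi_of_hasDerivAt_of_tendsto hcont hderiv hintF htop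
  rw [hw0, sub_zero] at key
  have hsplit : ∫ t in Ioi (0:ℝ), F2 t
      = (Phi α z * (-z)
        + (∫ t in Ioi (0:ℝ), (Complex.exp (-(z * t)) - 1) * ((t ^ (-α-1) : ℝ) : ℂ))
          * ((-α : ℝ) : ℂ)) * (-1/(α:ℂ)) := by
    rw [hF2def, MeasureTheory.integral_mul_const, MeasureTheory.integral_add hint1 hint2]
    congr 2
    · rw [Phi, ← MeasureTheory.integral_mul_const]
      refine setIntegral_congr_fun measurableSet_Ioi (fun t ht => ?_)
      ring
    · rw [← MeasureTheory.integral_mul_const]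
      refine setIntegral_congr_fun measurableSet_Ioi (fun t ht => ?_)
      push_cast
      ring
  rw [hsplit] at key
  have hc : (-1/(α:ℂ)) ≠ 0 := by simp [hα0']
  have hX : Phi α z * (-z)
      + (∫ t in Ioi (0:ℝ), (Complex.exp (-(z * t)) - 1) * ((t ^ (-α-1) : ℝ) : ℂ))
        * ((-α : ℝ) : ℂ) = 0 := by
    rcases mul_eq_zero.mp key with h | h
    · exact h
    · exact absurd h hc
  have hz0 : z ≠ 0 := by
    intro h; rw [h] at hz; simp at hz
  rw [Phi_eq hα0 hα1 hz] at hX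
  have hz_pow : z * z ^ ((α:ℂ) - 1) = z ^ (α:ℂ) := by
    have hh := Complex.cpow_add 1 ((α:ℂ) - 1) hz0
    rw [Complex.cpow_one] at hh
    rw [show (1:ℂ) + ((α:ℂ) - 1) = (α:ℂ) by ring] at hh
    rw [← hh]
  have h4 : (∫ t in Ioi (0:ℝ), (Complex.exp (-(z * t)) - 1) * ((t ^ (-α-1) : ℝ) : ℂ)) * (α:ℂ)
      = -(Complex.Gamma (1 - α) * z ^ (α:ℂ)) := by
    have hαc : ((-α : ℝ) : ℂ) = -(α:ℂ) := by push_cast; ring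
    rw [hαc] at hX
    linear_combination -hX - Complex.Gamma (1 - (α:ℂ)) * hz_pow
  rw [show -(Complex.Gamma (1 - (α:ℂ)) / (α:ℂ)) * z ^ (α:ℂ)
    = -(Complex.Gamma (1 - (α:ℂ)) * z ^ (α:ℂ)) / (α:ℂ) by ring]
  rw [eq_div_iff hα0']
  linear_combination h4


lemma norm_exp_I_omega (ω t : ℝ) : ‖Complex.exp (Complex.I * ω * t)‖ = 1 := by
  rw [ Complex.norm_exp]
  have : (Complex.I * ω * t).re = 0 := by
    simp [Complex.mul_re, Complex.mul_im]
  rw [this, Real.exp_zero]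

lemma contOn3 (ω : ℝ) (s : ℝ) {c : ℝ} (hc : 0 < c) :
    ContinuousOn (fun t : ℝ => Complex.exp (Complex.I * ω * t) * ((t ^ s : ℝ) : ℂ)) (Ioi c) := by
  apply ContinuousOn.mul
  · exact (Complex.continuous_exp.comp
      ((continuous_const.mul Complex.continuous_ofReal))).continuousOn
  · exact Complex.continuous_ofReal.comp_continuousOn
      ((continuousOn_id.rpow_const (fun x hx => Or.inl (ne_of_gt (lt_trans hc hx)))).mono
        (fun x hx => hx))

lemma int_apart {ω α : ℝ} (hα0 : 0 < α) {ε : ℝ} (hε : 0 < ε) :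
    IntegrableOn (fun t : ℝ => Complex.exp (Complex.I * ω * t) * ((t ^ (-α - 1) : ℝ) : ℂ))
      (Ioi ε) := by
  have hg : IntegrableOn (fun t : ℝ => t ^ (-α - 1)) (Ioi ε) :=
    integrableOn_Ioi_rpow_of_lt (by linarith) hε
  refine hg.mono' ((contOn3 ω (-α-1) hε).aestronglyMeasurable measurableSet_Ioi) ?_
  filter_upwards [ae_restrict_mem measurableSet_Ioi] with t ht
  rw [mem_Ioi] at ht
  have ht0 : 0 < t := lt_trans hε ht
  rw [norm_mul, norm_exp_I_omega, one_mul, Complex.norm_real,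
    Real.norm_of_nonneg (Real.rpow_nonneg ht0.le _)]

lemma contOn4 (ω : ℝ) (s : ℝ) :
    ContinuousOn (fun t : ℝ => (Complex.exp (Complex.I * ω * t) - 1) * ((t ^ s : ℝ) : ℂ))
      (Ioi 0) := by
  apply ContinuousOn.mul
  · exact ((Complex.continuous_exp.comp
      ((continuous_const.mul Complex.continuous_ofReal))).sub continuous_const).continuousOn
  · exact Complex.continuous_ofReal.comp_continuousOn
      (continuousOn_id.rpow_const (fun x hx => Or.inl (ne_of_gt hx)))

lemma int_bdry_omega {ω α : ℝ} (hω : 0 < ω) (hα0 : 0 < α) (hα1 : α < 1) :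
    IntegrableOn (fun t : ℝ => (Complex.exp (Complex.I * ω * t) - 1) * ((t ^ (-α - 1) : ℝ) : ℂ))
      (Ioi 0) := by
  have h := int_bdry hα0 hα1 (z := -(Complex.I * ω)) (by simp)
  refine h.congr_fun (fun t ht => ?_) measurableSet_Ioi
  congr 2
  ring

lemma bound_integrable {ω α : ℝ} (hω : 0 < ω) (hα0 : 0 < α) (hα1 : α < 1) :
    IntegrableOn (fun t : ℝ => if t ≤ 1 then (1 + ω) * t ^ (-α) else 2 * t ^ (-α - 1))
      (Ioi 0) := by
  have h1 : IntegrableOn (fun t : ℝ => if t ≤ 1 then (1 + ω) * t ^ (-α) else 2 * t ^ (-α - 1))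
      (Ioc 0 1) := by
    have hg : IntegrableOn (fun t : ℝ => (1 + ω) * t ^ (-α)) (Ioc 0 1) :=
      ((intervalIntegral.intervalIntegrable_rpow' (by linarith : (-1:ℝ) < -α)).1).const_mul _
    refine hg.congr_fun (fun t ht => ?_) measurableSet_Ioc
    rw [if_pos ht.2]
  have h2 : IntegrableOn (fun t : ℝ => if t ≤ 1 then (1 + ω) * t ^ (-α) else 2 * t ^ (-α - 1))
      (Ioi 1) := by
    have hg : IntegrableOn (fun t : ℝ => 2 * t ^ (-α - 1)) (Ioi 1) :=
      (integrableOn_Ioi_rpow_of_lt (by linarith) one_pos).const_mul _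
    refine hg.congr_fun (fun t ht => ?_) measurableSet_Ioi
    rw [mem_Ioi] at ht
    rw [if_neg (not_le.mpr ht)]
  have := h1.union h2
  rwa [Ioc_union_Ioi_eq_Ioi zero_le_one] at this

lemma bdry_val {ω α : ℝ} (hω : 0 < ω) (hα0 : 0 < α) (hα1 : α < 1) :
    ∫ t in Ioi (0:ℝ), (Complex.exp (Complex.I * ω * t) - 1) * ((t ^ (-α - 1) : ℝ) : ℂ)
      = -(Complex.Gamma (1 - α) / α) * (-(Complex.I * ω)) ^ (α:ℂ) := by
  have hIω : (-(Complex.I * (ω:ℂ))).im ≠ 0 := by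
    simp only [Complex.neg_im, Complex.mul_im, Complex.I_re, Complex.I_im,
      Complex.ofReal_re, Complex.ofReal_im]
    simp [hω.ne']
  -- limit of LHS along z = x - Iω, x → 0+
  have hA : Tendsto (fun x : ℝ => ∫ t in Ioi (0:ℝ),
      (Complex.exp (-(((x:ℂ) + -(Complex.I * ω)) * t)) - 1) * ((t ^ (-α - 1) : ℝ) : ℂ))
      (nhdsWithin 0 (Ioi 0))
      (nhds (∫ t in Ioi (0:ℝ),
        (Complex.exp (Complex.I * ω * t) - 1) * ((t ^ (-α - 1) : ℝ) : ℂ))) := by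
    apply MeasureTheory.tendsto_integral_filter_of_dominated_convergence
      (bound := fun t : ℝ => if t ≤ 1 then (1 + ω) * t ^ (-α) else 2 * t ^ (-α - 1))
    · filter_upwards [self_mem_nhdsWithin] with x hx
      exact (contOn2 ((x:ℂ) + -(Complex.I * ω)) (-α-1)).aestronglyMeasurable measurableSet_Ioi
    · filter_upwards [Ioc_mem_nhdsGT one_pos] with x hx
      obtain ⟨hx0, hx1⟩ := hx
      filter_upwards [ae_restrict_mem measurableSet_Ioi] with t ht
      rw [mem_Ioi] at ht
      have hzre : (0:ℝ) ≤ ((x:ℂ) + -(Complex.I * ω)).re := by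
        simp only [Complex.add_re, Complex.ofReal_re, Complex.neg_re, Complex.mul_re,
          Complex.I_re, Complex.I_im, Complex.ofReal_re, Complex.ofReal_im]
        simp [hx0.le]
      rw [norm_mul, Complex.norm_real, Real.norm_of_nonneg (Real.rpow_nonneg ht.le _)]
      by_cases hc : t ≤ 1
      · rw [if_pos hc]
        have hb : ‖Complex.exp (-(((x:ℂ) + -(Complex.I * ω)) * t)) - 1‖
            ≤ (1 + ω) * t := by
          have h3 := norm_exp_sub_one_le' (re_neg_mul_nonpos hzre ht.le)
          have h4 : ‖(-(((x:ℂ) + -(Complex.I * ω)) * t))‖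
              = ‖(x:ℂ) + -(Complex.I * ω)‖ * t := by
            rw [norm_neg, norm_mul, Complex.norm_real, Real.norm_of_nonneg ht.le]
          have h5 : ‖(x:ℂ) + -(Complex.I * ω)‖ ≤ 1 + ω := by
            calc ‖(x:ℂ) + -(Complex.I * ω)‖ ≤ ‖(x:ℂ)‖ + ‖-(Complex.I * (ω:ℂ))‖ :=
              norm_add_le _ _
            _ ≤ 1 + ω := by
                rw [norm_neg, norm_mul, Complex.norm_real, Complex.norm_I,
                  one_mul, Complex.norm_real, Real.norm_of_nonneg hx0.le,
                  Real.norm_of_nonneg hω.le]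
                gcongr
          calc ‖Complex.exp (-(((x:ℂ) + -(Complex.I * ω)) * t)) - 1‖
              ≤ ‖(x:ℂ) + -(Complex.I * ω)‖ * t := by rw [← h4]; exact h3
            _ ≤ (1 + ω) * t := by gcongr
        have ht1 : t * t ^ (-α - 1) = t ^ (-α) := by
          have hh := Real.rpow_add ht 1 (-α - 1)
          rw [Real.rpow_one] at hh
          rw [← hh]
          congr 1
          ring
        calc ‖Complex.exp (-(((x:ℂ) + -(Complex.I * ω)) * t)) - 1‖ * t ^ (-α - 1)
            ≤ (1 + ω) * t * t ^ (-α - 1) := by gcongr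
          _ = (1 + ω) * (t * t ^ (-α - 1)) := by ring
          _ = (1 + ω) * t ^ (-α) := by rw [ht1]
      · rw [if_neg hc]
        gcongr
        exact norm_exp_sub_one_le_two (re_neg_mul_nonpos hzre ht.le)
    · exact bound_integrable hω hα0 hα1
    · filter_upwards [ae_restrict_mem measurableSet_Ioi] with t ht
      rw [mem_Ioi] at ht
      have hcont : Continuous fun x : ℝ =>
          (Complex.exp (-(((x:ℂ) + -(Complex.I * ω)) * t)) - 1) * ((t ^ (-α - 1) : ℝ) : ℂ) := by
        continuity
      have h1 := (hcont.tendsto 0).mono_left (nhdsWithin_le_nhds (s := Ioi (0:ℝ)))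
      have h2 : -((((0:ℝ):ℂ) + -(Complex.I * ω)) * t) = Complex.I * ω * t := by
        push_cast
        ring
      rw [h2] at h1
      exact h1
  -- eventual equality with F_eq values
  have hB : (fun x : ℝ => ∫ t in Ioi (0:ℝ),
      (Complex.exp (-(((x:ℂ) + -(Complex.I * ω)) * t)) - 1) * ((t ^ (-α - 1) : ℝ) : ℂ))
      =ᶠ[nhdsWithin 0 (Ioi 0)]
      (fun x : ℝ => -(Complex.Gamma (1 - α) / α) * ((x:ℂ) + -(Complex.I * ω)) ^ (α:ℂ)) := by
    filter_upwards [self_mem_nhdsWithin] with x hx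
    rw [mem_Ioi] at hx
    exact F_eq hα0 hα1 (by simp [hx] : 0 < ((x:ℂ) + -(Complex.I * ω)).re)
  have hC : Tendsto (fun x : ℝ => -(Complex.Gamma (1 - α) / α)
      * ((x:ℂ) + -(Complex.I * ω)) ^ (α:ℂ)) (nhdsWithin 0 (Ioi 0))
      (nhds (-(Complex.Gamma (1 - α) / α) * (-(Complex.I * ω)) ^ (α:ℂ))) := by
    have hcp : ContinuousAt (fun z : ℂ => z ^ (α:ℂ)) (-(Complex.I * ω)) :=
      continuousAt_cpow_const (Or.inr hIω)
    have hz : Tendsto (fun x : ℝ => (x:ℂ) + -(Complex.I * ω)) (nhdsWithin 0 (Ioi 0))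
        (nhds (-(Complex.I * ω))) := by
      have := ((Complex.continuous_ofReal.tendsto 0).mono_left
        (nhdsWithin_le_nhds (s := Ioi (0:ℝ)))).add_const (-(Complex.I * (ω:ℂ)))
      simpa using this
    exact (hcp.tendsto.comp hz).const_mul _
  exact tendsto_nhds_unique hA ((Tendsto.congr' hB.symm) hC)

lemma const_id {ω α : ℝ} (hω : 0 < ω) :
    -(Complex.Gamma (1 - α) / α) * (-(Complex.I * ω)) ^ (α:ℂ)
      = Complex.exp (Real.pi * Complex.I * (2 - α) / 2) * ((ω ^ α : ℝ) : ℂ) / α *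
        Complex.Gamma (1 - α) := by
  have hne : -(Complex.I * (ω:ℂ)) ≠ 0 := by
    simp [Complex.ext_iff, hω.ne']
  have hmul : -(Complex.I * (ω:ℂ)) = (ω:ℂ) * (-Complex.I) := by ring
  have hlog : Complex.log (-(Complex.I * ω)) = (Real.log ω : ℂ) + -(Real.pi/2) * Complex.I := by
    rw [hmul, Complex.log_ofReal_mul hω (by simp), Complex.log_neg_I]
  have hcpow : (-(Complex.I * ω)) ^ (α:ℂ)
      = Complex.exp (((Real.log ω * α : ℝ) : ℂ)) * Complex.exp (-(Real.pi * Complex.I * α / 2)) := by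
    rw [Complex.cpow_def_of_ne_zero hne, hlog, ← Complex.exp_add]
    congr 1
    push_cast
    ring
  have hωα : ((ω ^ α : ℝ) : ℂ) = Complex.exp (((Real.log ω * α : ℝ) : ℂ)) := by
    rw [Real.rpow_def_of_pos hω, Complex.ofReal_exp]
  have hexp2 : Complex.exp ((Real.pi : ℂ) * Complex.I * (2 - (α:ℂ)) / 2)
      = -Complex.exp (-(Real.pi * Complex.I * α / 2)) := by
    rw [show (Real.pi : ℂ) * Complex.I * (2 - (α:ℂ)) / 2
      = (Real.pi : ℂ) * Complex.I + -(Real.pi * Complex.I * α / 2) by ring]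
    rw [Complex.exp_add, Complex.exp_pi_mul_I]
    ring
  rw [hcpow, ← hωα, hexp2]
  ring

end HFPaux

end HFP

open Filter MeasureTheory Set intervalIntegral Asymptotics

/-- Decomposition (2.19), case 0 < α < 1: the Hadamard finite-part integral
⨎_0^∞ e^{iωt} f(t)/t dt exists and equals
(e^{iπ(2−α)/2} ω^α / α) Γ(1−α) a₀ + ∫_0^∞ e^{iωt}(f(t) − a₀ t^{−α})/t dt. -/
theorem hadamard_finite_part_decomposition
    (ω α : ℝ) (f : ℝ → ℂ) (a₀ G : ℂ)
    (hω : 0 < ω) (hα0 : 0 < α) (hα1 : α < 1)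
    (hloc : LocallyIntegrableOn f (Ioi 0))
    (hasymp : (fun t : ℝ => f t - a₀ * ((t ^ (-α) : ℝ) : ℂ))
      =O[nhdsWithin 0 (Ioi 0)] fun t : ℝ => t ^ (1 - α))
    (hgi : ∀ R : ℝ, IntegrableOn (fun t : ℝ =>
      Complex.exp (Complex.I * ω * t) * (f t - a₀ * ((t ^ (-α) : ℝ) : ℂ)) / t) (Ioc 0 R))
    (hG : Tendsto (fun R : ℝ => ∫ t in (0 : ℝ)..R,
        Complex.exp (Complex.I * ω * t) * (f t - a₀ * ((t ^ (-α) : ℝ) : ℂ)) / t)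
      atTop (nhds G)) :
    ∃ J : ℝ → ℂ,
      (∀ ε : ℝ, 0 < ε → Tendsto (fun R : ℝ => ∫ t in ε..R,
          Complex.exp (Complex.I * ω * t) * f t / t) atTop (nhds (J ε))) ∧
      Tendsto (fun ε : ℝ => J ε - a₀ / (α * ((ε ^ α : ℝ) : ℂ)))
        (nhdsWithin 0 (Ioi 0))
        (nhds (Complex.exp (Real.pi * Complex.I * (2 - α) / 2) * ((ω ^ α : ℝ) : ℂ) / α *
          Complex.Gamma (1 - α) * a₀ + G)) := by
  classical
  open HFPaux in
  set g : ℝ → ℂ := fun t =>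
    Complex.exp (Complex.I * ω * t) * (f t - a₀ * ((t ^ (-α) : ℝ) : ℂ)) / t with hgdef
  set K : ℝ → ℂ := fun ε =>
    ∫ t in Ioi ε, Complex.exp (Complex.I * ω * t) * ((t ^ (-α - 1) : ℝ) : ℂ) with hKdef
  refine ⟨fun ε => (G - ∫ t in Ioc (0:ℝ) ε, g t) + a₀ * K ε, ?_, ?_⟩
  · -- Part 1
    intro ε hε
    have heq : (fun R : ℝ => ∫ t in ε..R, Complex.exp (Complex.I * ω * t) * f t / t)
        =ᶠ[atTop] (fun R : ℝ => ((∫ t in (0:ℝ)..R, g t) - ∫ t in (0:ℝ)..ε, g t)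
          + a₀ * ∫ t in ε..R, Complex.exp (Complex.I * ω * t) * ((t ^ (-α - 1) : ℝ) : ℂ)) := by
      filter_upwards [eventually_ge_atTop ε] with R hR
      have hg0R : IntervalIntegrable g volume 0 R :=
        (intervalIntegrable_iff_integrableOn_Ioc_of_le (by linarith)).mpr (hgi R)
      have hg0ε : IntervalIntegrable g volume 0 ε :=
        (intervalIntegrable_iff_integrableOn_Ioc_of_le hε.le).mpr (hgi ε)
      have hgεR : IntervalIntegrable g volume ε R :=
        (intervalIntegrable_iff_integrableOn_Ioc_of_le hR).mpr
          ((hgi R).mono_set (Ioc_subset_Ioc_left hε.le))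
      have hapart : IntervalIntegrable
          (fun t : ℝ => Complex.exp (Complex.I * ω * t) * ((t ^ (-α - 1) : ℝ) : ℂ)) volume ε R :=
        (intervalIntegrable_iff_integrableOn_Ioc_of_le hR).mpr
          ((HFPaux.int_apart hα0 hε).mono_set Ioc_subset_Ioi_self)
      have hcongr : (∫ t in ε..R, Complex.exp (Complex.I * ω * t) * f t / t)
          = ∫ t in ε..R, (g t
            + a₀ * (Complex.exp (Complex.I * ω * t) * ((t ^ (-α - 1) : ℝ) : ℂ))) := by
        apply intervalIntegral.integral_congr
        intro t ht
        rw [Set.uIcc_of_le hR] at ht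
        have ht0 : (0:ℝ) < t := lt_of_lt_of_le hε ht.1
        have h5 : (t:ℝ) ^ (-α - 1) = t ^ (-α) / t := by
          rw [div_eq_mul_inv, ← Real.rpow_neg_one t, ← Real.rpow_add ht0]
          congr 1 <;> ring
        rw [hgdef]
        simp only
        rw [h5]
        push_cast
        have htne : (t:ℂ) ≠ 0 := by exact_mod_cast ht0.ne'
        field_simp
        try ring
      rw [hcongr, intervalIntegral.integral_add hgεR (hapart.const_mul a₀),
        intervalIntegral.integral_const_mul,
        intervalIntegral.integral_interval_sub_left hg0R hg0ε]
    have hT2 : Tendsto (fun R : ℝ => ∫ t in ε..R,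
        Complex.exp (Complex.I * ω * t) * ((t ^ (-α - 1) : ℝ) : ℂ)) atTop (nhds (K ε)) :=
      intervalIntegral_tendsto_integral_Ioi ε (HFPaux.int_apart hα0 hε) tendsto_id
    have hT : Tendsto (fun R : ℝ => ((∫ t in (0:ℝ)..R, g t) - ∫ t in (0:ℝ)..ε, g t)
        + a₀ * ∫ t in ε..R, Complex.exp (Complex.I * ω * t) * ((t ^ (-α - 1) : ℝ) : ℂ))
        atTop (nhds ((G - ∫ t in (0:ℝ)..ε, g t) + a₀ * K ε)) :=
      (hG.sub tendsto_const_nhds).add (hT2.const_mul a₀)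
    have hfin := hT.congr' heq.symm
    rwa [intervalIntegral.integral_of_le hε.le] at hfin
  · -- Part 2
    have hL1 : Tendsto (fun ε : ℝ => ∫ t in Ioc (0:ℝ) ε, g t)
        (nhdsWithin 0 (Ioi 0)) (nhds 0) := by
      have hint : Integrable g (volume.restrict (Ioc (0:ℝ) 1)) := hgi 1
      have hmeas_tend : Tendsto (fun ε : ℝ => (volume.restrict (Ioc (0:ℝ) 1)) (Ioc 0 ε))
          (nhdsWithin 0 (Ioi 0)) (nhds 0) := by
        have h1 : (fun ε : ℝ => (volume.restrict (Ioc (0:ℝ) 1)) (Ioc 0 ε))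
            =ᶠ[nhdsWithin 0 (Ioi 0)] fun ε : ℝ => ENNReal.ofReal ε := by
          filter_upwards [Ioc_mem_nhdsGT one_pos] with ε hεm
          rw [Measure.restrict_apply measurableSet_Ioc,
            inter_eq_self_of_subset_left (Ioc_subset_Ioc_right hεm.2),
            Real.volume_Ioc]
          norm_num
        have h2 : Tendsto (fun ε : ℝ => ENNReal.ofReal ε) (nhdsWithin 0 (Ioi 0)) (nhds 0) := by
          have hid : Tendsto (fun ε : ℝ => ε) (nhdsWithin (0:ℝ) (Ioi 0)) (nhds 0) :=
            tendsto_id.mono_left nhdsWithin_le_nhds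
          have := ENNReal.tendsto_ofReal hid
          simpa using this
        exact h2.congr' h1.symm
      have htends := hint.tendsto_setIntegral_nhds_zero hmeas_tend
      refine htends.congr' ?_
      filter_upwards [Ioc_mem_nhdsGT one_pos] with ε hεm
      rw [Measure.restrict_restrict measurableSet_Ioc,
        inter_eq_self_of_subset_left (Ioc_subset_Ioc_right hεm.2)]
    have hM := HFPaux.bdry_val hω hα0 hα1
    have hL2 : Tendsto (fun ε : ℝ => ∫ t in Ioc (0:ℝ) ε,
        (Complex.exp (Complex.I * ω * t) - 1) * ((t ^ (-α - 1) : ℝ) : ℂ))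
        (nhdsWithin 0 (Ioi 0)) (nhds 0) := by
      have hint : Integrable (fun t : ℝ =>
          (Complex.exp (Complex.I * ω * t) - 1) * ((t ^ (-α - 1) : ℝ) : ℂ))
          (volume.restrict (Ioi (0:ℝ))) := HFPaux.int_bdry_omega hω hα0 hα1
      have hmeas_tend : Tendsto (fun ε : ℝ => (volume.restrict (Ioi (0:ℝ))) (Ioc 0 ε))
          (nhdsWithin 0 (Ioi 0)) (nhds 0) := by
        have h1 : (fun ε : ℝ => (volume.restrict (Ioi (0:ℝ))) (Ioc 0 ε))
            =ᶠ[nhdsWithin 0 (Ioi 0)] fun ε : ℝ => ENNReal.ofReal ε := by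
          filter_upwards [self_mem_nhdsWithin] with ε hεm
          rw [Measure.restrict_apply measurableSet_Ioc,
            inter_eq_self_of_subset_left Ioc_subset_Ioi_self, Real.volume_Ioc]
          norm_num
        have h2 : Tendsto (fun ε : ℝ => ENNReal.ofReal ε) (nhdsWithin 0 (Ioi 0)) (nhds 0) := by
          have hid : Tendsto (fun ε : ℝ => ε) (nhdsWithin (0:ℝ) (Ioi 0)) (nhds 0) :=
            tendsto_id.mono_left nhdsWithin_le_nhds
          have := ENNReal.tendsto_ofReal hid
          simpa using this
        exact h2.congr' h1.symm
      have htends := hint.tendsto_setIntegral_nhds_zero hmeas_tend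
      refine htends.congr' ?_
      filter_upwards [self_mem_nhdsWithin] with ε hεm
      rw [Measure.restrict_restrict measurableSet_Ioc,
        inter_eq_self_of_subset_left Ioc_subset_Ioi_self]
    have hL4 : Tendsto (fun ε : ℝ => ∫ t in Ioi ε,
        (Complex.exp (Complex.I * ω * t) - 1) * ((t ^ (-α - 1) : ℝ) : ℂ))
        (nhdsWithin 0 (Ioi 0))
        (nhds (-(Complex.Gamma (1 - α) / α) * (-(Complex.I * ω)) ^ ((α:ℝ):ℂ))) := by
      have hsplit : (fun ε : ℝ => ∫ t in Ioi ε,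
          (Complex.exp (Complex.I * ω * t) - 1) * ((t ^ (-α - 1) : ℝ) : ℂ))
          =ᶠ[nhdsWithin (0:ℝ) (Ioi 0)] (fun ε : ℝ =>
          (∫ t in Ioi (0:ℝ), (Complex.exp (Complex.I * ω * t) - 1) * ((t ^ (-α - 1) : ℝ) : ℂ))
            - ∫ t in Ioc (0:ℝ) ε, (Complex.exp (Complex.I * ω * t) - 1)
              * ((t ^ (-α - 1) : ℝ) : ℂ)) := by
        filter_upwards [self_mem_nhdsWithin] with ε hεm
        rw [mem_Ioi] at hεm
        have hib := HFPaux.int_bdry_omega hω hα0 hα1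
        have hu := MeasureTheory.setIntegral_union (Ioc_disjoint_Ioi le_rfl) measurableSet_Ioi
          (f := fun t : ℝ => (Complex.exp (Complex.I * ω * t) - 1) * ((t ^ (-α - 1) : ℝ) : ℂ))
          (hib.mono_set Ioc_subset_Ioi_self)
          (hib.mono_set (Ioi_subset_Ioi hεm.le))
        rw [Ioc_union_Ioi_eq_Ioi hεm.le] at hu
        rw [hu]
        ring
      have := (tendsto_const_nhds.sub hL2).congr' hsplit.symm
      rw [hM, sub_zero] at this
      exact this
    have hfinal : (fun ε : ℝ =>
        ((G - ∫ t in Ioc (0:ℝ) ε, g t) + a₀ * K ε) - a₀ / (α * ((ε ^ α : ℝ) : ℂ)))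
        =ᶠ[nhdsWithin (0:ℝ) (Ioi 0)] (fun ε : ℝ => (G - ∫ t in Ioc (0:ℝ) ε, g t)
          + a₀ * ∫ t in Ioi ε, (Complex.exp (Complex.I * ω * t) - 1)
            * ((t ^ (-α - 1) : ℝ) : ℂ)) := by
      filter_upwards [self_mem_nhdsWithin] with ε hεm
      rw [mem_Ioi] at hεm
      have hrval : ∫ t in Ioi ε, (t:ℝ) ^ (-α - 1) = ε ^ (-α) / α := by
        have h := integral_Ioi_rpow_of_lt (by linarith : (-α - 1:ℝ) < -1) hεm
        rw [show (-α - 1:ℝ) + 1 = -α by ring] at h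
        rw [h, neg_div_neg_eq]
      have hsub : K ε - ((ε ^ (-α) / α : ℝ) : ℂ)
          = ∫ t in Ioi ε, (Complex.exp (Complex.I * ω * t) - 1) * ((t ^ (-α - 1) : ℝ) : ℂ) := by
        have hintr : IntegrableOn (fun t : ℝ => ((t ^ (-α - 1) : ℝ) : ℂ)) (Ioi ε) :=
          (integrableOn_Ioi_rpow_of_lt (by linarith) hεm).ofReal
        have hcoe : (∫ t in Ioi ε, ((t ^ (-α - 1) : ℝ) : ℂ)) = ((ε ^ (-α) / α : ℝ) : ℂ) := by
          have h0 : (∫ t in Ioi ε, ((t ^ (-α - 1) : ℝ) : ℂ))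
              = (((∫ t in Ioi ε, t ^ (-α - 1) : ℝ)) : ℂ) := _root_.integral_ofReal
          rw [h0, hrval]
        rw [hKdef]
        simp only
        rw [← hcoe,
          ← MeasureTheory.integral_sub (HFPaux.int_apart hα0 hεm) hintr]
        refine setIntegral_congr_fun measurableSet_Ioi (fun t ht => ?_)
        ring
      have hcast : a₀ / (α * ((ε ^ α : ℝ) : ℂ)) = a₀ * ((ε ^ (-α) / α : ℝ) : ℂ) := by
        rw [Real.rpow_neg hεm.le]
        push_cast
        ring
      rw [hcast, ← hsub]
      ring
    have hT : Tendsto (fun ε : ℝ => (G - ∫ t in Ioc (0:ℝ) ε, g t)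
        + a₀ * ∫ t in Ioi ε, (Complex.exp (Complex.I * ω * t) - 1)
          * ((t ^ (-α - 1) : ℝ) : ℂ)) (nhdsWithin 0 (Ioi 0))
        (nhds ((G - 0) + a₀ * (-(Complex.Gamma (1 - α) / α)
          * (-(Complex.I * ω)) ^ ((α:ℝ):ℂ)))) :=
      (tendsto_const_nhds.sub hL1).add (hL4.const_mul a₀)
    have hval : (G - 0) + a₀ * (-(Complex.Gamma (1 - α) / α)
        * (-(Complex.I * ω)) ^ ((α:ℝ):ℂ))
        = Complex.exp (Real.pi * Complex.I * (2 - α) / 2) * ((ω ^ α : ℝ) : ℂ) / α *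
          Complex.Gamma (1 - α) * a₀ + G := by
      rw [HFPaux.const_id hω]
      ring
    rw [← hval]
    exact hT.congr' hfinal.symm
end

section
/- Let ω > 0, 0 < x < a, d with 0 ≤ d < ω, and let f be analytic on the open first quadrant {z : Re z > 0, Im z > 0}, continuous on its closure minus the origin, with constants M > 0, δ < 1 such that |f(z)| ≤ M·|z|^δ·e^{d·Im z} for all z in the closed first quadrant with |z| sufficiently large. Then the improper integral lim_{R→∞} ∫_a^R e^{iωt} f(t)/(t−x) dt exists and equals i·e^{iωa}·∫_0^∞ e^{−ωp}·f(a+ip)/(a−x+ip) dp. -/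
open Filter MeasureTheory Set intervalIntegral

set_option maxHeartbeats 1000000

lemma tail_bound_int (c : ℝ) (hc : 0 < c) :
    IntegrableOn (fun y : ℝ => (1+y) * Real.exp (-c*y)) (Ioi 0) := by
  have h1 := exp_neg_integrableOn_Ioi 0 hc
  have h2 := integrableOn_rpow_mul_exp_neg_mul_rpow (p := 1) (s := 1) (b := c) (by norm_num)
    one_pos hc
  simp only [Real.rpow_one] at h2
  have h3 := h1.add h2
  have : (fun y : ℝ => (1+y) * Real.exp (-c*y))
      = (fun y : ℝ => Real.exp (-c*y)) + (fun y : ℝ => y * Real.exp (-c*y)) := by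
    funext y; simp [Pi.add_apply]; ring
  rw [this]; exact h3

lemma tail_bound_tendsto (c : ℝ) (hc : 0 < c) :
    Tendsto (fun Y : ℝ => (1+Y) * Real.exp (-c*Y)) atTop (nhds 0) := by
  have h := (tendsto_rpow_mul_exp_neg_mul_atTop_nhds_zero 1 c hc).comp
    (tendsto_atTop_add_const_left atTop 1 tendsto_id)
  have h2 := h.const_mul (Real.exp c)
  rw [mul_zero] at h2
  refine h2.congr (fun Y => ?_)
  simp only [Function.comp_apply, Real.rpow_one, id_eq]
  rw [← mul_assoc, mul_comm (Real.exp c), mul_assoc, ← Real.exp_add]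
  ring_nf

/-- Equation (3.23): rotation of the contour for the nonsingular tail integral I₂(x). -/
theorem tail_integral_rotation
    (ω x a M δ d : ℝ) (f : ℂ → ℂ)
    (hω : 0 < ω) (hx : 0 < x) (hxa : x < a) (hd0 : 0 ≤ d) (hdω : d < ω)
    (hM : 0 < M) (hδ : δ < 1)
    (hcont : ContinuousOn f ({z : ℂ | 0 ≤ z.re ∧ 0 ≤ z.im} \ {0}))
    (hanal : ∀ z : ℂ, 0 < z.re → 0 < z.im → AnalyticAt ℂ f z)
    (hgrowth : ∃ R₀ : ℝ, ∀ z : ℂ, 0 ≤ z.re → 0 ≤ z.im → R₀ ≤ ‖z‖ →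
      ‖f (z)‖ ≤ M * ‖z‖ ^ δ * Real.exp (d * z.im)) :
    IntegrableOn (fun p : ℝ =>
      Complex.exp (-(ω * p)) * f ((a : ℂ) + Complex.I * p) /
        ((a : ℂ) - x + Complex.I * p)) (Ioi 0) ∧
    Tendsto (fun R : ℝ => ∫ t in a..R,
        Complex.exp (Complex.I * ω * t) * f t / ((t : ℂ) - x)) atTop
      (nhds (Complex.I * Complex.exp (Complex.I * ω * a) *
        ∫ p in Ioi (0 : ℝ),
          Complex.exp (-(ω * p)) * f ((a : ℂ) + Complex.I * p) /
            ((a : ℂ) - x + Complex.I * p))) := by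
  obtain ⟨R₀, hR₀⟩ := hgrowth
  set g : ℂ → ℂ := fun z => Complex.exp (Complex.I * ω * z) * f z / (z - x) with hg
  set s : ℝ → ℂ := fun p => Complex.exp (-(ω * p)) * f ((a : ℂ) + Complex.I * p) /
      ((a : ℂ) - x + Complex.I * p) with hs
  have ha : 0 < a := hx.trans hxa
  have hax : 0 < a - x := by linarith
  set δ' : ℝ := max δ 0 with hδ'
  have hδ'0 : 0 ≤ δ' := le_max_right _ _
  have hδ'1 : δ' < 1 := by
    rw [hδ']; exact max_lt hδ one_pos
  set c : ℝ := ω - d with hcdef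
  have hc0 : 0 < c := by rw [hcdef]; linarith
  set Y₀ : ℝ := max R₀ 1 with hY₀
  have hY₀1 : (1:ℝ) ≤ Y₀ := le_max_right _ _
  have hY₀0 : (0:ℝ) ≤ Y₀ := by linarith
  -- points with re ≥ a are nonzero, in the quadrant, and away from x
  have hne : ∀ z : ℂ, a ≤ z.re → z - (x:ℂ) ≠ 0 := by
    intro z hz h
    have : z.re - x = 0 := by
      have := congrArg Complex.re h
      simpa using this
    linarith
  have hmemT : ∀ z : ℂ, a ≤ z.re → 0 ≤ z.im →
      z ∈ ({z : ℂ | 0 ≤ z.re ∧ 0 ≤ z.im} \ {0}) := by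
    intro z h1 h2
    refine ⟨⟨by linarith, h2⟩, ?_⟩
    intro h0
    simp only [mem_singleton_iff] at h0
    rw [h0] at h1
    simp at h1
    linarith
  -- continuity of g on the shifted quadrant
  have hgcont : ContinuousOn g {z : ℂ | a ≤ z.re ∧ 0 ≤ z.im} := by
    apply ContinuousOn.div
    · exact (Complex.continuous_exp.comp (continuous_const.mul continuous_id)).continuousOn.mul
        (hcont.mono (fun z hz => hmemT z hz.1 hz.2))
    · exact (continuous_id.sub continuous_const).continuousOn
    · exact fun z hz => hne z hz.1
  -- the basic norm estimate
  have hgnorm : ∀ z : ℂ, a ≤ z.re → 0 ≤ z.im → Y₀ ≤ ‖z‖ →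
      ‖g z‖ ≤
        M * ‖z‖ ^ δ' * Real.exp (-c * z.im) / ‖z - x‖ := by
    intro z h1 h2 h3
    have habs1 : (1:ℝ) ≤ ‖z‖ := le_trans hY₀1 h3
    have hre : (Complex.I * (ω:ℂ) * z).re = -(ω * z.im) := by
      simp [Complex.mul_re, Complex.mul_im]
    have hδδ' : ‖z‖ ^ δ ≤ ‖z‖ ^ δ' :=
      Real.rpow_le_rpow_of_exponent_le habs1 (le_max_left _ _)
    have hfz : ‖f z‖ ≤ M * ‖z‖ ^ δ' * Real.exp (d * z.im) := by
      refine le_trans (hR₀ z (by linarith) h2 (le_trans (le_max_left _ _) h3)) ?_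
      exact mul_le_mul_of_nonneg_right (mul_le_mul_of_nonneg_left hδδ' hM.le)
        (Real.exp_nonneg _)
    have : ‖g z‖ =
        Real.exp (-(ω * z.im)) * ‖f z‖ / ‖z - x‖ := by
      rw [hg]
      simp only [norm_div, norm_mul, Complex.norm_exp, hre]
    rw [this]
    rw [div_le_div_iff_of_pos_right]
    · calc Real.exp (-(ω * z.im)) * ‖f z‖
          ≤ Real.exp (-(ω * z.im)) * (M * ‖z‖ ^ δ' * Real.exp (d * z.im)) := by
            gcongr
        _ = M * ‖z‖ ^ δ' * Real.exp (-c * z.im) := by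
            rw [show Real.exp (-(ω * z.im)) * (M * ‖z‖ ^ δ' * Real.exp (d * z.im))
                = M * ‖z‖ ^ δ' * (Real.exp (d * z.im) * Real.exp (-(ω * z.im)))
              from by ring, ← Real.exp_add]
            congr 2
            rw [hcdef]; ring
    · exact norm_pos_iff.mpr (hne z h1)
  -- uniform bound on vertical segments at abscissa b ∈ [a, B]
  have hlinebound : ∀ b B y : ℝ, a ≤ b → b ≤ B → Y₀ ≤ y →
      ‖g ((b:ℂ) + (y:ℂ) * Complex.I)‖ ≤
        (M * (B+1) ^ δ' / (a - x)) * ((1+y) * Real.exp (-c*y)) := by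
    intro b B y hab hbB hy
    have hy0 : 0 ≤ y := le_trans hY₀0 hy
    have hb0 : 0 < b := lt_of_lt_of_le ha hab
    have hB0 : 0 < B := lt_of_lt_of_le hb0 hbB
    set z : ℂ := (b:ℂ) + (y:ℂ) * Complex.I with hz
    have hzre : z.re = b := by simp [hz]
    have hzim : z.im = y := by simp [hz]
    have habs_ge : Y₀ ≤ ‖z‖ := by
      refine le_trans hy ?_
      calc y ≤ |z.im| := by rw [hzim]; exact le_abs_self y
        _ ≤ ‖z‖ := Complex.abs_im_le_norm z
    have habs_le : ‖z‖ ≤ (B+1) * (1+y) := by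
      calc ‖z‖ ≤ ‖(b:ℂ)‖ + ‖(y:ℂ) * Complex.I‖ :=
            norm_add_le _ _
        _ = b + y := by
            simp [Complex.norm_real, abs_of_nonneg hy0, abs_of_nonneg hb0.le]
        _ ≤ (B+1) * (1+y) := by nlinarith
    have hrpow : ‖z‖ ^ δ' ≤ (B+1) ^ δ' * (1+y) := by
      calc ‖z‖ ^ δ' ≤ ((B+1) * (1+y)) ^ δ' :=
            Real.rpow_le_rpow (norm_nonneg z) habs_le hδ'0
        _ = (B+1) ^ δ' * (1+y) ^ δ' := Real.mul_rpow (by linarith) (by linarith)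
        _ ≤ (B+1) ^ δ' * (1+y) := by
            gcongr
            calc (1+y) ^ δ' ≤ (1+y) ^ (1:ℝ) :=
                  Real.rpow_le_rpow_of_exponent_le (by linarith) hδ'1.le
              _ = 1 + y := Real.rpow_one _
    have hden : a - x ≤ ‖z - x‖ := by
      calc a - x ≤ (z - (x:ℂ)).re := by
            simp only [Complex.sub_re, Complex.ofReal_re, hzre]; linarith
        _ ≤ ‖z - x‖ := Complex.re_le_norm _
    calc ‖g z‖
        ≤ M * ‖z‖ ^ δ' * Real.exp (-c * z.im) / ‖z - x‖ :=
          hgnorm z (by rw [hzre]; exact hab) (by rw [hzim]; exact hy0) habs_ge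
      _ ≤ M * ((B+1) ^ δ' * (1+y)) * Real.exp (-c * y) / (a - x) := by
          apply div_le_div₀ (by positivity) _ hax hden
          rw [hzim]
          exact mul_le_mul_of_nonneg_right (mul_le_mul_of_nonneg_left hrpow hM.le)
            (Real.exp_nonneg _)
      _ = (M * (B+1) ^ δ' / (a - x)) * ((1+y) * Real.exp (-c*y)) := by ring
  -- continuity along vertical lines
  have hline_cont : ∀ b : ℝ, a ≤ b →
      ContinuousOn (fun y : ℝ => g ((b:ℂ) + (y:ℂ) * Complex.I)) (Ici 0) := by
    intro b hb
    apply hgcont.comp (Continuous.continuousOn (by continuity))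
    intro y hy
    refine ⟨?_, ?_⟩ <;> simp only [mem_setOf_eq, Complex.add_re, Complex.add_im,
      Complex.ofReal_re, Complex.ofReal_im, Complex.mul_re, Complex.mul_im,
      Complex.I_re, Complex.I_im]
    · simpa using hb
    · simpa using hy
  -- integrability along vertical lines
  have hvert : ∀ b : ℝ, a ≤ b →
      IntegrableOn (fun y : ℝ => g ((b:ℂ) + (y:ℂ) * Complex.I)) (Ioi 0) := by
    intro b hb
    rw [← Ioc_union_Ioi_eq_Ioi hY₀0]
    apply IntegrableOn.union
    · exact (((hline_cont b hb).mono (fun y hy => hy.1)).integrableOn_Icc).mono_set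
        Ioc_subset_Icc_self
    · have hbi0 : IntegrableOn
          (fun y : ℝ => (M * (b+1) ^ δ' / (a-x)) * ((1+y) * Real.exp (-c*y))) (Ioi 0) :=
        (tail_bound_int c hc0).const_mul _
      have hbi := hbi0.mono_set (Ioi_subset_Ioi hY₀0)
      refine Integrable.mono' hbi ?_ ?_
      · exact ((hline_cont b hb).mono
          (fun y hy => le_trans hY₀0 (le_of_lt hy))).aestronglyMeasurable measurableSet_Ioi
      · filter_upwards [ae_restrict_mem measurableSet_Ioi] with y hy
        exact hlinebound b b y hb le_rfl hy.le
  -- the rectangle identity, with the top side sent to infinity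
  have hkey : ∀ R : ℝ, a ≤ R → (∫ t in a..R, g t) =
      Complex.I • (∫ y in Ioi (0:ℝ), g ((a:ℂ) + (y:ℂ) * Complex.I)) -
      Complex.I • (∫ y in Ioi (0:ℝ), g ((R:ℂ) + (y:ℂ) * Complex.I)) := by
    intro R hR
    have hrect : ∀ Y : ℝ, 0 ≤ Y → (∫ t in a..R, g t) =
        Complex.I • (∫ y in (0:ℝ)..Y, g ((a:ℂ) + (y:ℂ) * Complex.I)) -
        Complex.I • (∫ y in (0:ℝ)..Y, g ((R:ℂ) + (y:ℂ) * Complex.I)) +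
        ∫ t in a..R, g ((t:ℂ) + (Y:ℂ) * Complex.I) := by
      intro Y hY
      have hwre : ((R:ℂ) + (Y:ℂ) * Complex.I).re = R := by simp
      have hwim : ((R:ℂ) + (Y:ℂ) * Complex.I).im = Y := by simp
      have hC : ContinuousOn g
          (Set.uIcc ((a:ℂ)).re ((R:ℂ) + (Y:ℂ) * Complex.I).re ×ℂ
            Set.uIcc ((a:ℂ)).im ((R:ℂ) + (Y:ℂ) * Complex.I).im) := by
        refine hgcont.mono ?_
        intro z hz
        rw [Complex.mem_reProdIm, hwre, hwim, Complex.ofReal_re, Complex.ofReal_im,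
          uIcc_of_le hR, uIcc_of_le hY] at hz
        exact ⟨hz.1.1, hz.2.1⟩
      have hD : ∀ z ∈ (Ioo (min ((a:ℂ)).re (((R:ℂ) + (Y:ℂ) * Complex.I)).re)
            (max ((a:ℂ)).re (((R:ℂ) + (Y:ℂ) * Complex.I)).re) ×ℂ
          Ioo (min ((a:ℂ)).im (((R:ℂ) + (Y:ℂ) * Complex.I)).im)
            (max ((a:ℂ)).im (((R:ℂ) + (Y:ℂ) * Complex.I)).im)) \ (∅ : Set ℂ),
          DifferentiableAt ℂ g z := by
        intro z hz
        rw [mem_diff, Complex.mem_reProdIm, hwre, hwim, Complex.ofReal_re, Complex.ofReal_im,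
          min_eq_left hR, max_eq_right hR, min_eq_left hY, max_eq_right hY] at hz
        have h1 : 0 < z.re := lt_trans ha hz.1.1.1
        have h2 : 0 < z.im := hz.1.2.1
        exact (((differentiableAt_id.const_mul (Complex.I * (ω:ℂ))).cexp.mul
          (hanal z h1 h2).differentiableAt).div (differentiableAt_id.sub_const _)
          (hne z hz.1.1.1.le))
      have h0 := Complex.integral_boundary_rect_eq_zero_of_differentiable_on_off_countable g
        (a:ℂ) ((R:ℂ) + (Y:ℂ) * Complex.I) ∅ countable_empty hC hD
      simp only [hwre, hwim, Complex.ofReal_re, Complex.ofReal_im, Complex.ofReal_zero,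
        zero_mul, add_zero] at h0
      linear_combination h0
    have h1 : Tendsto (fun Y : ℝ => Complex.I • (∫ y in (0:ℝ)..Y, g ((a:ℂ) + (y:ℂ) * Complex.I)))
        atTop (nhds (Complex.I • (∫ y in Ioi (0:ℝ), g ((a:ℂ) + (y:ℂ) * Complex.I)))) :=
      (intervalIntegral_tendsto_integral_Ioi 0 (hvert a le_rfl) tendsto_id).const_smul _
    have h2 : Tendsto (fun Y : ℝ => Complex.I • (∫ y in (0:ℝ)..Y, g ((R:ℂ) + (y:ℂ) * Complex.I)))
        atTop (nhds (Complex.I • (∫ y in Ioi (0:ℝ), g ((R:ℂ) + (y:ℂ) * Complex.I)))) :=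
      (intervalIntegral_tendsto_integral_Ioi 0 (hvert R hR) tendsto_id).const_smul _
    have h3 : Tendsto (fun Y : ℝ => ∫ t in a..R, g ((t:ℂ) + (Y:ℂ) * Complex.I)) atTop
        (nhds 0) := by
      apply squeeze_zero_norm'
        (a := fun Y : ℝ => (M * (R+1) ^ δ' / (a-x)) * ((1+Y) * Real.exp (-c*Y)) * |R - a|)
      · filter_upwards [eventually_ge_atTop Y₀] with Y hY
        refine intervalIntegral.norm_integral_le_of_norm_le_const ?_
        intro t ht
        rw [uIoc_of_le hR] at ht
        exact hlinebound t R Y ht.1.le ht.2 hY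
      · have := ((tail_bound_tendsto c hc0).const_mul (M * (R+1) ^ δ' / (a-x))).mul_const |R - a|
        rwa [mul_zero, zero_mul] at this
    have hconv := (h1.sub h2).add h3
    rw [add_zero] at hconv
    have heq : (fun Y : ℝ =>
        Complex.I • (∫ y in (0:ℝ)..Y, g ((a:ℂ) + (y:ℂ) * Complex.I)) -
        Complex.I • (∫ y in (0:ℝ)..Y, g ((R:ℂ) + (y:ℂ) * Complex.I)) +
        ∫ t in a..R, g ((t:ℂ) + (Y:ℂ) * Complex.I)) =ᶠ[atTop]
        (fun _ : ℝ => ∫ t in a..R, g t) := by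
      filter_upwards [eventually_ge_atTop 0] with Y hY
      exact (hrect Y hY).symm
    exact tendsto_nhds_unique ((tendsto_congr' heq).mpr tendsto_const_nhds) hconv
  -- bound on far vertical lines, with decay in R
  have hRbound : ∀ R y : ℝ, Y₀ ≤ R → a ≤ R → 2*x ≤ R → 0 ≤ y →
      ‖g ((R:ℂ) + (y:ℂ) * Complex.I)‖ ≤
        (M * R ^ δ' / (R - x)) * ((1+y) * Real.exp (-c*y)) := by
    intro R y hYR haR hxR hy0
    have hR1 : (1:ℝ) ≤ R := le_trans hY₀1 hYR
    have hRx : 0 < R - x := by linarith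
    set z : ℂ := (R:ℂ) + (y:ℂ) * Complex.I with hz
    have hzre : z.re = R := by simp [hz]
    have hzim : z.im = y := by simp [hz]
    have habs_ge : Y₀ ≤ ‖z‖ := by
      refine le_trans hYR ?_
      calc R = z.re := hzre.symm
        _ ≤ ‖z‖ := Complex.re_le_norm z
    have habs_le : ‖z‖ ≤ R * (1+y) := by
      calc ‖z‖ ≤ ‖(R:ℂ)‖ + ‖(y:ℂ) * Complex.I‖ :=
            norm_add_le _ _
        _ = R + y := by
            simp [Complex.norm_real, abs_of_nonneg hy0, abs_of_nonneg (by linarith : (0:ℝ) ≤ R)]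
        _ ≤ R * (1+y) := by nlinarith
    have hrpow : ‖z‖ ^ δ' ≤ R ^ δ' * (1+y) := by
      calc ‖z‖ ^ δ' ≤ (R * (1+y)) ^ δ' :=
            Real.rpow_le_rpow (norm_nonneg z) habs_le hδ'0
        _ = R ^ δ' * (1+y) ^ δ' := Real.mul_rpow (by linarith) (by linarith)
        _ ≤ R ^ δ' * (1+y) := by
            gcongr
            calc (1+y) ^ δ' ≤ (1+y) ^ (1:ℝ) :=
                  Real.rpow_le_rpow_of_exponent_le (by linarith) hδ'1.le
              _ = 1 + y := Real.rpow_one _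
    have hden : R - x ≤ ‖z - x‖ := by
      calc R - x ≤ (z - (x:ℂ)).re := by
            simp only [Complex.sub_re, Complex.ofReal_re, hzre]; linarith
        _ ≤ ‖z - x‖ := Complex.re_le_norm _
    calc ‖g z‖
        ≤ M * ‖z‖ ^ δ' * Real.exp (-c * z.im) / ‖z - x‖ :=
          hgnorm z (by rw [hzre]; exact haR) (by rw [hzim]; exact hy0) habs_ge
      _ ≤ M * (R ^ δ' * (1+y)) * Real.exp (-c * y) / (R - x) := by
          apply div_le_div₀ (by positivity) _ hRx hden
          rw [hzim]
          exact mul_le_mul_of_nonneg_right (mul_le_mul_of_nonneg_left hrpow hM.le)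
            (Real.exp_nonneg _)
      _ = (M * R ^ δ' / (R - x)) * ((1+y) * Real.exp (-c*y)) := by ring
  -- the far vertical integral tends to zero
  set C₀ : ℝ := ∫ y in Ioi (0:ℝ), (1+y) * Real.exp (-c*y) with hC₀
  have hC₀0 : 0 ≤ C₀ := by
    rw [hC₀]
    apply setIntegral_nonneg measurableSet_Ioi
    intro y hy
    have : (0:ℝ) < y := hy
    positivity
  have hV0 : Tendsto (fun R : ℝ => ∫ y in Ioi (0:ℝ), g ((R:ℂ) + (y:ℂ) * Complex.I)) atTop
      (nhds 0) := by
    apply squeeze_zero_norm' (a := fun R : ℝ => (2 * M * C₀) * R ^ (δ' - 1))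
    · filter_upwards [eventually_ge_atTop (max (max Y₀ a) (2*x))] with R hR
      have hYR : Y₀ ≤ R := le_trans (le_trans (le_max_left _ _) (le_max_left _ _)) hR
      have haR : a ≤ R := le_trans (le_trans (le_max_right _ _) (le_max_left _ _)) hR
      have hxR : 2*x ≤ R := le_trans (le_max_right _ _) hR
      have hR1 : (1:ℝ) ≤ R := le_trans hY₀1 hYR
      have hRx : 0 < R - x := by linarith
      have step1 : ‖∫ y in Ioi (0:ℝ), g ((R:ℂ) + (y:ℂ) * Complex.I)‖ ≤
          ∫ y in Ioi (0:ℝ), (M * R ^ δ' / (R - x)) * ((1+y) * Real.exp (-c*y)) := by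
        apply MeasureTheory.norm_integral_le_of_norm_le ((tail_bound_int c hc0).const_mul _)
        filter_upwards [ae_restrict_mem measurableSet_Ioi] with y hy
        exact hRbound R y hYR haR hxR (le_of_lt hy)
      have step2 : (∫ y in Ioi (0:ℝ), (M * R ^ δ' / (R - x)) * ((1+y) * Real.exp (-c*y)))
          = (M * R ^ δ' / (R - x)) * C₀ := by
        rw [hC₀, ← MeasureTheory.integral_const_mul]
      have step3 : (M * R ^ δ' / (R - x)) * C₀ ≤ (2 * M * C₀) * R ^ (δ' - 1) := by
        have hfrac : M * R ^ δ' / (R - x) ≤ 2 * M * R ^ (δ' - 1) := by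
          have h2 : R - x ≥ R / 2 := by linarith
          calc M * R ^ δ' / (R - x) ≤ M * R ^ δ' / (R / 2) := by
                apply div_le_div_of_nonneg_left (by positivity) (by linarith) h2
            _ = 2 * M * (R ^ δ' / R) := by ring
            _ = 2 * M * R ^ (δ' - 1) := by
                rw [Real.rpow_sub (by linarith) δ' 1, Real.rpow_one]
        calc (M * R ^ δ' / (R - x)) * C₀ ≤ (2 * M * R ^ (δ' - 1)) * C₀ :=
              mul_le_mul_of_nonneg_right hfrac hC₀0
          _ = (2 * M * C₀) * R ^ (δ' - 1) := by ring
      exact le_trans step1 (le_trans (le_of_eq step2) step3)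
    · have h := (tendsto_rpow_neg_atTop (y := 1 - δ') (by linarith)).const_mul (2 * M * C₀)
      rw [mul_zero] at h
      refine h.congr (fun R => ?_)
      norm_num
  -- assembly
  have hEa : ∀ p : ℝ, g ((a:ℂ) + (p:ℝ) * Complex.I) =
      Complex.exp (Complex.I * ω * a) * s p := by
    intro p
    have hexp : Complex.exp (Complex.I * (ω:ℂ) * ((a:ℂ) + (p:ℂ) * Complex.I)) =
        Complex.exp (Complex.I * (ω:ℂ) * (a:ℂ)) * Complex.exp (-((ω:ℂ) * (p:ℂ))) := by
      rw [← Complex.exp_add]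
      congr 1
      linear_combination ((ω:ℂ) * (p:ℂ)) * Complex.I_mul_I
    rw [hg, hs]
    simp only
    rw [hexp]
    rw [show ((a:ℂ) + (p:ℂ) * Complex.I) = ((a:ℂ) + Complex.I * (p:ℂ)) by ring]
    rw [show ((a:ℂ) + Complex.I * (p:ℂ) - (x:ℂ)) = ((a:ℂ) - (x:ℂ) + Complex.I * (p:ℂ)) by ring]
    ring
  have hE : Complex.exp (Complex.I * (ω:ℂ) * (a:ℂ)) ≠ 0 := Complex.exp_ne_zero _
  have hsint : IntegrableOn s (Ioi 0) := by
    have h1 : IntegrableOn (fun p : ℝ =>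
        (Complex.exp (Complex.I * (ω:ℂ) * (a:ℂ)))⁻¹ * g ((a:ℂ) + (p:ℝ) * Complex.I)) (Ioi 0) :=
      (hvert a le_rfl).const_mul _
    refine h1.congr_fun (fun p _ => ?_) measurableSet_Ioi
    beta_reduce
    rw [hEa p, ← mul_assoc, inv_mul_cancel₀ hE, one_mul]
  have hVa : (∫ y in Ioi (0:ℝ), g ((a:ℂ) + (y:ℂ) * Complex.I)) =
      Complex.exp (Complex.I * (ω:ℂ) * (a:ℂ)) * ∫ p in Ioi (0:ℝ), s p := by
    rw [← MeasureTheory.integral_const_mul]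
    exact setIntegral_congr_fun measurableSet_Ioi (fun p _ => hEa p)
  constructor
  · exact hsint
  · have htend : Tendsto (fun R : ℝ => ∫ t in a..R, g t) atTop
        (nhds (Complex.I • (∫ y in Ioi (0:ℝ), g ((a:ℂ) + (y:ℂ) * Complex.I)))) := by
      have h1 : Tendsto (fun R : ℝ =>
          Complex.I • (∫ y in Ioi (0:ℝ), g ((a:ℂ) + (y:ℂ) * Complex.I)) -
          Complex.I • (∫ y in Ioi (0:ℝ), g ((R:ℂ) + (y:ℂ) * Complex.I))) atTop
          (nhds (Complex.I • (∫ y in Ioi (0:ℝ), g ((a:ℂ) + (y:ℂ) * Complex.I)) -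
            Complex.I • (0:ℂ))) :=
        tendsto_const_nhds.sub (hV0.const_smul _)
      rw [smul_zero, sub_zero] at h1
      refine h1.congr' ?_
      filter_upwards [eventually_ge_atTop a] with R hR
      exact (hkey R hR).symm
    have : Complex.I • (∫ y in Ioi (0:ℝ), g ((a:ℂ) + (y:ℂ) * Complex.I)) =
        Complex.I * Complex.exp (Complex.I * ω * a) * ∫ p in Ioi (0:ℝ), s p := by
      rw [hVa, smul_eq_mul]; ring
    rw [this] at htend
    exact htend
end

section
/- Let ω̃ > 0 and τ ∈ (−1, 1), and set u₁ = ω̃(1−τ), u₂ = ω̃(1+τ). Then the Cauchy principal value ⨍_{−1}^{1} e^{iω̃y}/(y−τ) dy equals cos(ω̃τ)·[Ci(u₁) − Ci(u₂)] − sin(ω̃τ)·[Si(u₁) + Si(u₂)] + i·( sin(ω̃τ)·[Ci(u₁) − Ci(u₂)] + cos(ω̃τ)·[Si(u₁) + Si(u₂)] ), where Si(u) = ∫_0^u (sin t)/t dt and Ci(u) = −lim_{R→∞} ∫_u^R (cos t)/t dt. -/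
open Filter MeasureTheory Set intervalIntegral

lemma cosdiv_intInt {a b : ℝ} (ha : 0 < a) (hb : 0 < b) :
    IntervalIntegrable (fun t => Real.cos t / t) volume a b := by
  apply ContinuousOn.intervalIntegrable
  refine ContinuousOn.div Real.continuous_cos.continuousOn continuousOn_id ?_
  intro x hx
  exact ne_of_gt (lt_of_lt_of_le (lt_min ha hb) hx.1)

lemma sindivsq_integrable {u : ℝ} (hu : 0 < u) :
    IntegrableOn (fun t => Real.sin t / t ^ 2) (Ioi u) := by
  have h2 : IntegrableOn (fun t : ℝ => t ^ (-2 : ℝ)) (Ioi u) :=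
    integrableOn_Ioi_rpow_of_lt (by norm_num) hu
  refine h2.mono' ?_ ?_
  · refine (Measurable.aestronglyMeasurable ?_)
    exact Real.measurable_sin.div (measurable_id.pow_const 2)
  · filter_upwards [ae_restrict_mem measurableSet_Ioi] with t ht
    have ht0 : 0 < t := hu.trans ht
    rw [Real.rpow_neg ht0.le, Real.norm_eq_abs, abs_div,
      show ((2:ℝ)) = ((2:ℕ):ℝ) by norm_num, Real.rpow_natCast,
      abs_of_pos (pow_pos ht0 2), ← one_div, div_le_div_iff₀ (pow_pos ht0 2) (pow_pos ht0 2)]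
    nlinarith [Real.abs_sin_le_one t, pow_pos ht0 2, abs_nonneg (Real.sin t)]

lemma cos_tail {u : ℝ} (hu : 0 < u) :
    Tendsto (fun R => ∫ t in u..R, Real.cos t / t) atTop
      (nhds (-(Real.sin u / u) + ∫ t in Ioi u, Real.sin t / t ^ 2)) := by
  have key : ∀ R : ℝ, u ≤ R → (∫ t in u..R, Real.cos t / t) =
      Real.sin R / R - Real.sin u / u + ∫ t in u..R, Real.sin t / t ^ 2 := by
    intro R hR
    have hpos : ∀ x ∈ uIcc u R, (0:ℝ) < x := by
      intro x hx
      have := hx.1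
      rw [uIcc_of_le hR] at hx
      linarith [hx.1]
    have := intervalIntegral.integral_mul_deriv_eq_deriv_mul
      (u := fun x : ℝ => x⁻¹) (u' := fun x : ℝ => -(x^2)⁻¹)
      (v := Real.sin) (v' := Real.cos)
      (fun x hx => hasDerivAt_inv (hpos x hx).ne')
      (fun x hx => Real.hasDerivAt_sin x)
      (by
        apply ContinuousOn.intervalIntegrable
        refine ContinuousOn.neg (ContinuousOn.inv₀ (by fun_prop) ?_)
        intro x hx; exact (pow_pos (hpos x hx) 2).ne')
      (Real.continuous_cos.intervalIntegrable u R)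
    have h1 : (∫ t in u..R, Real.cos t / t) = ∫ x in u..R, x⁻¹ * Real.cos x := by
      congr 1; funext t; rw [div_eq_inv_mul]
    rw [h1, this]
    have h2 : (∫ x in u..R, -(x^2)⁻¹ * Real.sin x) = -∫ t in u..R, Real.sin t / t^2 := by
      rw [← intervalIntegral.integral_neg]
      congr 1; funext t; rw [div_eq_inv_mul]; ring
    rw [h2]
    ring_nf
  have h3 : Tendsto (fun R => Real.sin R / R) atTop (nhds 0) := by
    refine squeeze_zero_norm' (a := fun R : ℝ => R⁻¹) ?_ tendsto_inv_atTop_zero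
    · filter_upwards [eventually_ge_atTop (1:ℝ)] with R hR
      rw [Real.norm_eq_abs, abs_div, div_le_iff₀ (by positivity : (0:ℝ) < |R|),
        inv_mul_eq_div, div_eq_inv_mul, abs_of_pos (by linarith : (0:ℝ) < R)]
      calc |Real.sin R| ≤ 1 := Real.abs_sin_le_one R
        _ ≤ R⁻¹ * R := by rw [inv_mul_cancel₀ (by linarith : R ≠ 0)]
  have h4 : Tendsto (fun R => ∫ t in u..R, Real.sin t / t ^ 2) atTop
      (nhds (∫ t in Ioi u, Real.sin t / t ^ 2)) :=
    intervalIntegral_tendsto_integral_Ioi u (sindivsq_integrable hu) tendsto_id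
  have h5 := (h3.sub_const (Real.sin u / u)).add h4
  rw [zero_sub] at h5
  refine h5.congr' ?_
  filter_upwards [eventually_ge_atTop u] with R hR
  exact (key R hR).symm

lemma contdiv_intInt (g : ℝ → ℝ) (hg : Continuous g) {a b : ℝ} (ha : 0 < a) (hb : 0 < b) :
    IntervalIntegrable (fun t => g t / t) volume a b := by
  apply ContinuousOn.intervalIntegrable
  refine ContinuousOn.div hg.continuousOn continuousOn_id ?_
  intro x hx
  exact ne_of_gt (lt_of_lt_of_le (lt_min ha hb) hx.1)

lemma contdivC_intInt (g : ℝ → ℂ) (hg : Continuous g) {a b : ℝ} (ha : 0 < a) (hb : 0 < b) :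
    IntervalIntegrable (fun t => g t / (t:ℂ)) volume a b := by
  apply ContinuousOn.intervalIntegrable
  refine ContinuousOn.div hg.continuousOn (Complex.continuous_ofReal.continuousOn) ?_
  intro x hx
  have : (0:ℝ) < x := lt_of_lt_of_le (lt_min ha hb) hx.1
  exact_mod_cast ne_of_gt this

lemma sindiv_intInt (ω : ℝ) (hω : 0 < ω) {a b : ℝ} (ha : 0 ≤ a) (hb : 0 ≤ b) :
    IntervalIntegrable (fun t => Real.sin (ω * t) / t) volume a b := by
  rw [intervalIntegrable_iff]
  refine Measure.integrableOn_of_bounded (M := ω) ?_ ?_ ?_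
  · exact ne_of_lt (measure_Ioc_lt_top)
  · have : Measurable fun t : ℝ => Real.sin (ω * t) / t := by fun_prop
    exact this.aestronglyMeasurable
  · filter_upwards [ae_restrict_mem measurableSet_uIoc] with t ht
    have ht0 : 0 < t := by
      have : 0 ≤ min a b := le_min ha hb
      have h1 := ht.1
      rw [Set.uIoc_eq_union] at ht
      rcases ht with h | h
      · linarith [h.1]
      · linarith [h.1]
    rw [Real.norm_eq_abs, abs_div, abs_of_pos ht0, div_le_iff₀ ht0]
    calc |Real.sin (ω * t)| ≤ |ω * t| := Real.abs_sin_le_abs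
      _ = ω * t := abs_of_pos (mul_pos hω ht0)

lemma sin_head (ω A : ℝ) (hω : 0 < ω) (hA : 0 < A) :
    Tendsto (fun ε => ∫ t in ε..A, Real.sin (ω*t)/t) (nhdsWithin 0 (Ioi 0))
      (nhds (∫ t in (0:ℝ)..A, Real.sin (ω*t)/t)) := by
  have key : ∀ ε : ℝ, 0 < ε → (∫ t in ε..A, Real.sin (ω*t)/t) =
      (∫ t in (0:ℝ)..A, Real.sin (ω*t)/t) - ∫ t in (0:ℝ)..ε, Real.sin (ω*t)/t := by
    intro ε hε
    rw [intervalIntegral.integral_interval_sub_left (sindiv_intInt ω hω le_rfl hA.le)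
      (sindiv_intInt ω hω le_rfl hε.le)]
  have hsmall : Tendsto (fun ε : ℝ => ∫ t in (0:ℝ)..ε, Real.sin (ω*t)/t)
      (nhdsWithin 0 (Ioi 0)) (nhds 0) := by
    refine squeeze_zero_norm' (a := fun ε : ℝ => ω * |ε - 0|) ?_ ?_
    · filter_upwards [self_mem_nhdsWithin] with ε (hε : (0:ℝ) < ε)
      refine intervalIntegral.norm_integral_le_of_norm_le_const (C := ω) ?_ |>.trans_eq ?_
      · intro x hx
        rw [uIoc_of_le hε.le] at hx
        rw [Real.norm_eq_abs, abs_div, abs_of_pos hx.1, div_le_iff₀ hx.1]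
        calc |Real.sin (ω * x)| ≤ |ω * x| := Real.abs_sin_le_abs
          _ = ω * x := abs_of_pos (mul_pos hω hx.1)
      · rfl
    · have : Tendsto (fun ε : ℝ => ω * |ε - 0|) (nhds 0) (nhds 0) := by
        have h := ((continuous_const (y := ω)).mul
          ((continuous_id.sub (continuous_const (y := (0:ℝ)))).abs)).tendsto (0:ℝ)
        have h' : Tendsto (fun ε : ℝ => ω * |ε - 0|) (nhds 0) (nhds (ω * |(0:ℝ) - 0|)) := h
        simpa using h'
      exact this.mono_left nhdsWithin_le_nhds
  have := (tendsto_const_nhds (x := ∫ t in (0:ℝ)..A, Real.sin (ω*t)/t)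
      (f := nhdsWithin (0:ℝ) (Ioi 0))).sub hsmall
  rw [sub_zero] at this
  refine this.congr' ?_
  filter_upwards [self_mem_nhdsWithin] with ε (hε : (0:ℝ) < ε)
  exact (key ε hε).symm

lemma scale_int (ω : ℝ) (hω : 0 < ω) (g : ℝ → ℝ) (a b : ℝ) :
    (∫ t in a..b, g (ω*t) / t) = ∫ t in (ω*a)..(ω*b), g t / t := by
  have h := intervalIntegral.integral_comp_mul_left (a := a) (b := b)
    (fun t => g t / t) hω.ne'
  have h2 : ∀ t : ℝ, g (ω*t)/t = ω * (g (ω*t)/(ω*t)) := by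
    intro t
    rcases eq_or_ne t 0 with rfl | ht
    · simp
    · field_simp
  have h3 : (∫ t in a..b, g (ω*t)/t) = ∫ t in a..b, ω * (g (ω*t)/(ω*t)) :=
    intervalIntegral.integral_congr (fun t _ => h2 t)
  rw [h3, intervalIntegral.integral_const_mul, h, smul_eq_mul, ← mul_assoc,
    mul_inv_cancel₀ hω.ne', one_mul]

lemma ofReal_contdiv_intInt (g : ℝ → ℝ) (hg : Continuous g) {a b : ℝ} (ha : 0 < a) (hb : 0 < b) :
    IntervalIntegrable (fun t => ((g t / t : ℝ) : ℂ)) volume a b := by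
  apply ContinuousOn.intervalIntegrable
  apply Complex.continuous_ofReal.comp_continuousOn
  refine ContinuousOn.div hg.continuousOn continuousOn_id ?_
  intro x hx
  exact ne_of_gt (lt_of_lt_of_le (lt_min ha hb) hx.1)

lemma keyId (ω τ ε : ℝ) (hτ1 : -1 < τ) (hτ2 : τ < 1) (hε : 0 < ε) :
    (∫ y in (-1:ℝ)..(τ-ε), Complex.exp (Complex.I * ω * y) / ((y:ℂ) - τ)) +
      (∫ y in (τ+ε)..(1:ℝ), Complex.exp (Complex.I * ω * y) / ((y:ℂ) - τ)) =
    Complex.exp (Complex.I * ω * τ) *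
      (((((∫ t in ε..(1-τ), Real.cos (ω*t)/t) - ∫ t in ε..(1+τ), Real.cos (ω*t)/t : ℝ)) : ℂ) +
        Complex.I * (((∫ t in ε..(1-τ), Real.sin (ω*t)/t) + ∫ t in ε..(1+τ), Real.sin (ω*t)/t : ℝ) : ℂ)) := by
  have h1τ : (0:ℝ) < 1 - τ := by linarith
  have h2τ : (0:ℝ) < 1 + τ := by linarith
  set f : ℝ → ℂ := fun y => Complex.exp (Complex.I * ω * y) / ((y:ℂ) - τ) with hf
  set G : ℝ → ℂ := fun t => (((Real.cos (ω*t)/t : ℝ)):ℂ) + Complex.I * ((Real.sin (ω*t)/t : ℝ):ℂ) with hG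
  set E : ℂ := Complex.exp (Complex.I * ω * τ) with hE
  have hshift : ∀ t : ℝ, f (t+τ) = E * G t := by
    intro t
    show Complex.exp (Complex.I * ω * ((t:ℝ)+τ:ℝ)) / (((t:ℝ)+τ:ℝ) - (τ:ℂ)) = _
    have harg : (Complex.I * ω * (((t:ℝ)+τ:ℝ) : ℂ)) =
        Complex.I * ω * τ + ((ω*t : ℝ):ℂ) * Complex.I := by push_cast; ring
    rw [harg, Complex.exp_add]
    rw [show ((((t:ℝ)+τ:ℝ):ℂ) - (τ:ℂ)) = (t:ℂ) by push_cast; ring]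
    rw [Complex.exp_mul_I, ← Complex.ofReal_cos, ← Complex.ofReal_sin, hG, hE]
    push_cast
    ring
  have e1 : (∫ y in (-1:ℝ)..(τ-ε), f y) = ∫ t in (-1-τ)..(-ε), E * G t := by
    have h := intervalIntegral.integral_comp_add_right (a := -1-τ) (b := -ε) f τ
    rw [show (-1-τ+τ : ℝ) = -1 by ring, show (-ε+τ : ℝ) = τ-ε by ring] at h
    rw [← h]
    exact intervalIntegral.integral_congr fun t _ => hshift t
  have e2 : (∫ y in (τ+ε)..(1:ℝ), f y) = ∫ t in ε..(1-τ), E * G t := by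
    have h := intervalIntegral.integral_comp_add_right (a := ε) (b := 1-τ) f τ
    rw [show (ε+τ : ℝ) = τ+ε by ring, show (1-τ+τ : ℝ) = 1 by ring] at h
    rw [← h]
    exact intervalIntegral.integral_congr fun t _ => hshift t
  have e3 : (∫ t in (-1-τ)..(-ε), E * G t) = ∫ x in ε..(1+τ), E * G (-x) := by
    have h := intervalIntegral.integral_comp_neg (a := ε) (b := 1+τ) (fun t => E * G t)
    rw [show (-(1+τ) : ℝ) = -1-τ by ring] at h
    exact h.symm
  have hGneg : ∀ x : ℝ, G (-x) =
      -(((Real.cos (ω*x)/x : ℝ)):ℂ) + Complex.I * ((Real.sin (ω*x)/x : ℝ):ℂ) := by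
    intro x
    rw [hG]
    push_cast [mul_neg, Real.cos_neg, Real.sin_neg, div_neg, neg_div]
    ring
  -- integrability
  have hcI : ∀ {A : ℝ}, 0 < A →
      IntervalIntegrable (fun t => ((Real.cos (ω*t)/t : ℝ):ℂ)) volume ε A := fun hA =>
    ofReal_contdiv_intInt _ (Real.continuous_cos.comp (continuous_const.mul continuous_id)) hε hA
  have hsI : ∀ {A : ℝ}, 0 < A →
      IntervalIntegrable (fun t => ((Real.sin (ω*t)/t : ℝ):ℂ)) volume ε A := fun hA =>
    ofReal_contdiv_intInt _ (Real.continuous_sin.comp (continuous_const.mul continuous_id)) hε hA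
  have i1 : (∫ t in ε..(1-τ), G t) =
      ((∫ t in ε..(1-τ), Real.cos (ω*t)/t : ℝ) : ℂ) +
        Complex.I * ((∫ t in ε..(1-τ), Real.sin (ω*t)/t : ℝ) : ℂ) := by
    rw [hG]
    rw [intervalIntegral.integral_add (hcI h1τ) ((hsI h1τ).const_mul Complex.I),
      intervalIntegral.integral_const_mul, intervalIntegral.integral_ofReal,
      intervalIntegral.integral_ofReal]
  have i2 : (∫ x in ε..(1+τ), G (-x)) =
      -((∫ t in ε..(1+τ), Real.cos (ω*t)/t : ℝ) : ℂ) +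
        Complex.I * ((∫ t in ε..(1+τ), Real.sin (ω*t)/t : ℝ) : ℂ) := by
    have : (∫ x in ε..(1+τ), G (-x)) = ∫ x in ε..(1+τ),
        (-(((Real.cos (ω*x)/x : ℝ)):ℂ) + Complex.I * ((Real.sin (ω*x)/x : ℝ):ℂ)) :=
      intervalIntegral.integral_congr fun x _ => hGneg x
    rw [this, intervalIntegral.integral_add (f := fun x => -((Real.cos (ω*x)/x : ℝ):ℂ))
      ((hcI h2τ).neg) ((hsI h2τ).const_mul Complex.I),
      intervalIntegral.integral_neg, intervalIntegral.integral_const_mul,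
      intervalIntegral.integral_ofReal, intervalIntegral.integral_ofReal]
  rw [e1, e2, e3, intervalIntegral.integral_const_mul, intervalIntegral.integral_const_mul,
    i1, i2]
  push_cast
  ring

/-- Equation (3.21): explicit form of ⨍_{−1}^1 e^{iω̃y}/(y−τ) dy via Si and Ci. -/
theorem pv_finite_exp_closed_form
    (ω τ : ℝ) (hω : 0 < ω) (hτ : τ ∈ Ioo (-1 : ℝ) 1) :
    ∃ c₁ c₂ : ℝ,
      Tendsto (fun R : ℝ => ∫ t in (ω * (1 - τ))..R, Real.cos t / t) atTop (nhds c₁) ∧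
      Tendsto (fun R : ℝ => ∫ t in (ω * (1 + τ))..R, Real.cos t / t) atTop (nhds c₂) ∧
      Tendsto (fun ε : ℝ =>
          (∫ y in (-1 : ℝ)..(τ - ε), Complex.exp (Complex.I * ω * y) / ((y : ℂ) - τ)) +
          ∫ y in (τ + ε)..(1 : ℝ), Complex.exp (Complex.I * ω * y) / ((y : ℂ) - τ))
        (nhdsWithin 0 (Ioi 0))
        (nhds (((Real.cos (ω * τ) * ((-c₁) - (-c₂)) -
              Real.sin (ω * τ) * ((∫ t in (0 : ℝ)..(ω * (1 - τ)), Real.sin t / t) +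
                ∫ t in (0 : ℝ)..(ω * (1 + τ)), Real.sin t / t) : ℝ) : ℂ) +
          Complex.I * ((Real.sin (ω * τ) * ((-c₁) - (-c₂)) +
              Real.cos (ω * τ) * ((∫ t in (0 : ℝ)..(ω * (1 - τ)), Real.sin t / t) +
                ∫ t in (0 : ℝ)..(ω * (1 + τ)), Real.sin t / t) : ℝ) : ℂ))) := by
  obtain ⟨hτ1, hτ2⟩ := hτ
  have h1τ : (0:ℝ) < 1 - τ := by linarith
  have h2τ : (0:ℝ) < 1 + τ := by linarith
  have hu₁ : (0:ℝ) < ω * (1 - τ) := mul_pos hω h1τ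
  have hu₂ : (0:ℝ) < ω * (1 + τ) := mul_pos hω h2τ
  refine ⟨-(Real.sin (ω * (1 - τ)) / (ω * (1 - τ))) + ∫ t in Ioi (ω * (1 - τ)), Real.sin t / t ^ 2,
    -(Real.sin (ω * (1 + τ)) / (ω * (1 + τ))) + ∫ t in Ioi (ω * (1 + τ)), Real.sin t / t ^ 2,
    cos_tail hu₁, cos_tail hu₂, ?_⟩
  set u₁ : ℝ := ω * (1 - τ)
  set u₂ : ℝ := ω * (1 + τ)
  set c₁ : ℝ := -(Real.sin u₁ / u₁) + ∫ t in Ioi u₁, Real.sin t / t ^ 2 with hc₁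
  set c₂ : ℝ := -(Real.sin u₂ / u₂) + ∫ t in Ioi u₂, Real.sin t / t ^ 2 with hc₂
  -- the constant A
  have hsub : c₁ - c₂ = ∫ t in u₁..u₂, Real.cos t / t := by
    have hd : Tendsto (fun R => (∫ t in u₁..R, Real.cos t / t) -
        ∫ t in u₂..R, Real.cos t / t) atTop (nhds (c₁ - c₂)) :=
      (cos_tail hu₁).sub (cos_tail hu₂)
    have he : (fun R => (∫ t in u₁..R, Real.cos t / t) - ∫ t in u₂..R, Real.cos t / t)
        =ᶠ[atTop] fun _ => ∫ t in u₁..u₂, Real.cos t / t := by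
      filter_upwards [eventually_ge_atTop (max u₁ u₂)] with R hR
      have hRpos : (0:ℝ) < R := lt_of_lt_of_le hu₂ ((le_max_right _ _).trans hR)
      have := intervalIntegral.integral_add_adjacent_intervals
        (cosdiv_intInt hu₁ hu₂) (cosdiv_intInt hu₂ hRpos)
      linarith [this]
    exact tendsto_nhds_unique (hd.congr' he) tendsto_const_nhds
  set A : ℝ := (-c₁) - (-c₂) with hA
  have hAeq : A = -∫ t in u₁..u₂, Real.cos t / t := by rw [hA, ← hsub]; ring
  -- cos difference is constant in ε
  have hCdiff : ∀ ε : ℝ, 0 < ε →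
      (∫ t in ε..(1-τ), Real.cos (ω*t)/t) - (∫ t in ε..(1+τ), Real.cos (ω*t)/t) = A := by
    intro ε hε
    have hadj := intervalIntegral.integral_add_adjacent_intervals
      (contdiv_intInt (fun t => Real.cos (ω*t)) (by fun_prop) hε h1τ)
      (contdiv_intInt (fun t => Real.cos (ω*t)) (by fun_prop) h1τ h2τ)
    have hsc := scale_int ω hω Real.cos (1-τ) (1+τ)
    rw [hAeq, ← hsc]
    linarith [hadj]
  -- sin integrals limit
  have hS1 : Tendsto (fun ε => ∫ t in ε..(1-τ), Real.sin (ω*t)/t) (nhdsWithin 0 (Ioi 0))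
      (nhds (∫ t in (0:ℝ)..u₁, Real.sin t / t)) := by
    have h := sin_head ω (1-τ) hω h1τ
    have hsc := scale_int ω hω Real.sin 0 (1-τ)
    rw [mul_zero] at hsc
    rwa [hsc] at h
  have hS2 : Tendsto (fun ε => ∫ t in ε..(1+τ), Real.sin (ω*t)/t) (nhdsWithin 0 (Ioi 0))
      (nhds (∫ t in (0:ℝ)..u₂, Real.sin t / t)) := by
    have h := sin_head ω (1+τ) hω h2τ
    have hsc := scale_int ω hω Real.sin 0 (1+τ)
    rw [mul_zero] at hsc
    rwa [hsc] at h
  set B : ℝ := (∫ t in (0:ℝ)..u₁, Real.sin t / t) + ∫ t in (0:ℝ)..u₂, Real.sin t / t with hB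
  have hS : Tendsto (fun ε => (∫ t in ε..(1-τ), Real.sin (ω*t)/t) +
      ∫ t in ε..(1+τ), Real.sin (ω*t)/t) (nhdsWithin 0 (Ioi 0)) (nhds B) := hS1.add hS2
  -- continuous postcomposition
  set φ : ℝ → ℂ := fun x => Complex.exp (Complex.I * ω * τ) * ((A : ℂ) + Complex.I * (x : ℂ))
    with hφ
  have hφc : Continuous φ := by
    apply continuous_const.mul
    exact continuous_const.add (continuous_const.mul Complex.continuous_ofReal)
  have hmain : Tendsto (fun ε : ℝ =>
      (∫ y in (-1 : ℝ)..(τ - ε), Complex.exp (Complex.I * ω * y) / ((y : ℂ) - τ)) +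
      ∫ y in (τ + ε)..(1 : ℝ), Complex.exp (Complex.I * ω * y) / ((y : ℂ) - τ))
      (nhdsWithin 0 (Ioi 0)) (nhds (φ B)) := by
    have hcomp := (hφc.continuousAt (x := B)).tendsto.comp hS
    refine hcomp.congr' ?_
    filter_upwards [self_mem_nhdsWithin] with ε (hε : (0:ℝ) < ε)
    rw [Function.comp_apply, hφ]
    rw [keyId ω τ ε hτ1 hτ2 hε]
    rw [hCdiff ε hε]
  convert hmain using 2
  rw [hφ]
  rw [show Complex.I * (ω:ℂ) * (τ:ℂ) = ((ω*τ : ℝ):ℂ) * Complex.I by push_cast; ring,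
    Complex.exp_mul_I, ← Complex.ofReal_cos, ← Complex.ofReal_sin]
  simp only [Complex.ext_iff]
  push_cast
  simp [Complex.add_re, Complex.add_im, Complex.mul_re, Complex.mul_im]
  constructor <;> ring
end

section
/- Let 0 ≤ α < 1, ω̃ > 0, and for each integer k ≥ 0 let Z_k = ∫_{−1}^{1} (1+y)^{−α}·T_k(y)·e^{iω̃y} dy, where T_k is the degree-k Chebyshev polynomial of the first kind. Then for every integer n ≥ 2: iω̃(n−1)·Z_{n+1} + [2(n−α+1)(n−1) + iω̃(n−2)]·Z_n + [2n(n+α−2) − iω̃(n+1)]·Z_{n−1} − iω̃·n·Z_{n−2} = −2^{2−α}·e^{iω̃}. -/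
open Filter MeasureTheory Set intervalIntegral

open Polynomial Polynomial.Chebyshev in
private lemma chebA' (k : ℤ) (x : ℝ) :
    (1 + x) * (2 * ((k : ℝ) + 1) * (T ℝ (k + 2)).eval x
        - 2 * ((k : ℝ) + 2) * (T ℝ (k + 1)).eval x)
      = ((k : ℝ) + 1) * (T ℝ (k + 3)).eval x + (k : ℝ) * (T ℝ (k + 2)).eval x
        - ((k : ℝ) + 3) * (T ℝ (k + 1)).eval x - ((k : ℝ) + 2) * (T ℝ k).eval x := by
  have h3 : (T ℝ (k + 3)).eval x = 2 * x * (T ℝ (k + 2)).eval x - (T ℝ (k + 1)).eval x := by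
    have := congrArg (Polynomial.eval x) (T_add_two ℝ (k + 1))
    rw [show k + 1 + 2 = k + 3 by ring, show k + 1 + 1 = k + 2 by ring] at this
    simpa using this
  have h2 : (T ℝ (k + 2)).eval x = 2 * x * (T ℝ (k + 1)).eval x - (T ℝ k).eval x := by
    have := congrArg (Polynomial.eval x) (T_add_two ℝ k)
    simpa using this
  linear_combination (-(k : ℝ) - 1) * h3 + ((k : ℝ) + 2) * h2

open Polynomial Polynomial.Chebyshev in
private lemma chebB' (k : ℤ) (x : ℝ) :
    (1 + x) * ((U ℝ (k + 1)).eval x - (U ℝ k).eval x)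
      = (T ℝ (k + 2)).eval x + (T ℝ (k + 1)).eval x := by
  have hA : (U ℝ (k + 2)).eval x = x * (U ℝ (k + 1)).eval x + (T ℝ (k + 2)).eval x := by
    have := congrArg (Polynomial.eval x) (U_eq_X_mul_U_add_T ℝ (k + 1))
    rw [show k + 1 + 1 = k + 2 by ring] at this
    simpa using this
  have hB : (U ℝ (k + 1)).eval x = x * (U ℝ k).eval x + (T ℝ (k + 1)).eval x := by
    have := congrArg (Polynomial.eval x) (U_eq_X_mul_U_add_T ℝ k)
    simpa using this
  have hC : (U ℝ (k + 2)).eval x = 2 * x * (U ℝ (k + 1)).eval x - (U ℝ k).eval x := by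
    have := congrArg (Polynomial.eval x) (U_add_two ℝ k)
    simpa using this
  linear_combination hA + hB - hC

open Polynomial Polynomial.Chebyshev in
private lemma cheb_eval_one (j : ℤ) : (T ℝ j).eval 1 = 1 := by
  have := T_real_cos (θ := 0) (n := j)
  simpa using this

/-- Four-term recurrence (3.17) for the Chebyshev moments
Z_k = ∫_{−1}^1 (1+y)^{−α} T_k(y) e^{iω̃y} dy. -/
theorem chebyshev_moments_four_term_recurrence
    (α ω : ℝ) (hα0 : 0 ≤ α) (hα1 : α < 1) (hω : 0 < ω)
    (Z : ℕ → ℂ)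
    (hZ : ∀ k : ℕ, Z k = ∫ y in (-1 : ℝ)..1,
      (((1 + y) ^ (-α) : ℝ) : ℂ) *
        (((Polynomial.Chebyshev.T ℝ (k : ℤ)).eval y : ℝ) : ℂ) *
        Complex.exp (Complex.I * ω * y))
    (n : ℕ) (hn : 2 ≤ n) :
    Complex.I * ω * ((n : ℂ) - 1) * Z (n + 1) +
      (2 * ((n : ℂ) - α + 1) * ((n : ℂ) - 1) + Complex.I * ω * ((n : ℂ) - 2)) * Z n +
      (2 * (n : ℂ) * ((n : ℂ) + α - 2) - Complex.I * ω * ((n : ℂ) + 1)) * Z (n - 1) -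
      Complex.I * ω * (n : ℂ) * Z (n - 2) =
    -(((2 : ℝ) ^ (2 - α) : ℝ) : ℂ) * Complex.exp (Complex.I * ω) := by
  obtain ⟨m, rfl⟩ : ∃ m, n = m + 2 := ⟨n - 2, by omega⟩
  clear hn
  -- the integrand of Z_j with integer index
  set f : ℤ → ℝ → ℂ := fun j y =>
    (((1 + y) ^ (-α) : ℝ) : ℂ) * (((Polynomial.Chebyshev.T ℝ j).eval y : ℝ) : ℂ) *
      Complex.exp (Complex.I * ω * y) with hfdef
  have hZ3 : Z (m + 2 + 1) = ∫ y in (-1:ℝ)..1, f ((m : ℤ) + 3) y := by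
    rw [hZ]; push_cast [hfdef]; rw [show (m:ℤ)+2+1 = (m:ℤ)+3 by ring]
  have hZ2 : Z (m + 2) = ∫ y in (-1:ℝ)..1, f ((m : ℤ) + 2) y := by
    rw [hZ]; push_cast [hfdef]; norm_num
  have hZ1 : Z (m + 2 - 1) = ∫ y in (-1:ℝ)..1, f ((m : ℤ) + 1) y := by
    rw [show m + 2 - 1 = m + 1 from rfl, hZ]; push_cast [hfdef]; norm_num
  have hZ0 : Z (m + 2 - 2) = ∫ y in (-1:ℝ)..1, f ((m : ℤ)) y := by
    rw [show m + 2 - 2 = m from rfl, hZ]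
  -- integrability
  have hw : IntervalIntegrable (fun y : ℝ => (1 + y) ^ (-α)) volume (-1) 1 := by
    have h : IntervalIntegrable (fun x : ℝ => x ^ (-α)) volume 0 2 :=
      intervalIntegral.intervalIntegrable_rpow' (by linarith)
    have h2 := h.comp_add_right 1
    norm_num at h2
    simpa [add_comm] using h2
  have hwC : IntervalIntegrable (fun y : ℝ => (((1 + y) ^ (-α) : ℝ) : ℂ)) volume (-1) 1 := by
    rw [intervalIntegrable_iff] at hw ⊢
    exact hw.ofReal
  have hInt : ∀ j : ℤ, IntervalIntegrable (f j) volume (-1) 1 := by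
    intro j
    have hg : ContinuousOn (fun y : ℝ =>
        (((Polynomial.Chebyshev.T ℝ j).eval y : ℝ) : ℂ) * Complex.exp (Complex.I * ω * y))
        (uIcc (-1) 1) := by
      apply Continuous.continuousOn
      exact (Complex.continuous_ofReal.comp (Polynomial.continuous _)).mul
        (Complex.continuous_exp.comp (by fun_prop))
    have := hwC.mul_continuousOn hg
    simpa [hfdef, mul_assoc] using this
  rw [hZ3, hZ2, hZ1, hZ0]
  rw [← intervalIntegral.integral_const_mul, ← intervalIntegral.integral_const_mul,
    ← intervalIntegral.integral_const_mul, ← intervalIntegral.integral_const_mul,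
    ← intervalIntegral.integral_add ((hInt _).const_mul _) ((hInt _).const_mul _),
    ← intervalIntegral.integral_add (((hInt _).const_mul _).add ((hInt _).const_mul _))
      ((hInt _).const_mul _),
    ← intervalIntegral.integral_sub ((((hInt _).const_mul _).add ((hInt _).const_mul _)).add
      ((hInt _).const_mul _)) ((hInt _).const_mul _)]
  -- FTC
  set u : ℝ → ℝ := fun y => (1 + y) ^ (1 - α) *
    (2 * ((m : ℝ) + 1) * (Polynomial.Chebyshev.T ℝ ((m : ℤ) + 2)).eval y
      - 2 * ((m : ℝ) + 2) * (Polynomial.Chebyshev.T ℝ ((m : ℤ) + 1)).eval y) with hudef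
  set F : ℝ → ℂ := fun y => ((u y : ℝ) : ℂ) * Complex.exp (Complex.I * ω * y) with hFdef
  have hcu : Continuous u := by
    have h1 : Continuous fun y : ℝ => (1 + y) ^ (1 - α) := by
      rw [continuous_iff_continuousAt]; intro x
      exact (continuousAt_const.add continuousAt_id).rpow_const (Or.inr (by linarith))
    exact h1.mul ((continuous_const.mul (Polynomial.continuous _)).sub
      (continuous_const.mul (Polynomial.continuous _)))
  have hcF : Continuous F :=
    (Complex.continuous_ofReal.comp hcu).mul (Complex.continuous_exp.comp (by fun_prop))
  have hderiv : ∀ x ∈ Ioo (-1 : ℝ) 1, HasDerivAt F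
      (Complex.I * ω * ((↑(m + 2) : ℂ) - 1) * f ((m : ℤ) + 3) x +
        (2 * ((↑(m + 2) : ℂ) - α + 1) * ((↑(m + 2) : ℂ) - 1) +
          Complex.I * ω * ((↑(m + 2) : ℂ) - 2)) * f ((m : ℤ) + 2) x +
        (2 * (↑(m + 2) : ℂ) * ((↑(m + 2) : ℂ) + α - 2) -
          Complex.I * ω * ((↑(m + 2) : ℂ) + 1)) * f ((m : ℤ) + 1) x -
        Complex.I * ω * (↑(m + 2) : ℂ) * f ((m : ℤ)) x) x := by
    intro x hx
    have hs : (0 : ℝ) < 1 + x := by linarith [hx.1]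
    have hT2 := (Polynomial.Chebyshev.T ℝ ((m : ℤ) + 2)).hasDerivAt x
    have hT1 := (Polynomial.Chebyshev.T ℝ ((m : ℤ) + 1)).hasDerivAt x
    have hr : HasDerivAt (fun y : ℝ => (1 + y) ^ (1 - α)) ((1 - α) * (1 + x) ^ (-α)) x := by
      have h := ((hasDerivAt_id x).const_add 1).rpow_const (p := 1 - α) (Or.inl (ne_of_gt hs))
      simpa [show (1 : ℝ) - α - 1 = -α by ring] using h
    have hqe := (hT2.const_mul (2 * ((m : ℝ) + 1))).sub (hT1.const_mul (2 * ((m : ℝ) + 2)))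
    have hu' := hr.mul hqe
    have hE : HasDerivAt (fun y : ℝ => Complex.exp (Complex.I * ω * y))
        (Complex.I * ω * Complex.exp (Complex.I * ω * x)) x := by
      have h := (((hasDerivAt_id (x : ℂ)).const_mul (Complex.I * ω)).cexp).comp_ofReal
      simpa [mul_comm] using h
    have hF' := (hu'.ofReal_comp).mul hE
    refine HasDerivAt.congr_deriv hF' (Eq.symm ?_)
    -- pointwise algebraic identity
    have hPw : (1 + x) ^ (1 - α) = (1 + x) * (1 + x) ^ (-α) := by
      have h := Real.rpow_add hs 1 (-α)
      rw [Real.rpow_one] at h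
      rw [show (1 : ℝ) - α = 1 + -α by ring, h]
    have hdT2 : (Polynomial.derivative (Polynomial.Chebyshev.T ℝ ((m : ℤ) + 2))).eval x
        = ((m : ℝ) + 2) * (Polynomial.Chebyshev.U ℝ ((m : ℤ) + 1)).eval x := by
      rw [Polynomial.Chebyshev.T_derivative_eq_U, show (m : ℤ) + 2 - 1 = (m : ℤ) + 1 by ring]
      push_cast
      simp
    have hdT1 : (Polynomial.derivative (Polynomial.Chebyshev.T ℝ ((m : ℤ) + 1))).eval x
        = ((m : ℝ) + 1) * (Polynomial.Chebyshev.U ℝ ((m : ℤ))).eval x := by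
      rw [Polynomial.Chebyshev.T_derivative_eq_U, show (m : ℤ) + 1 - 1 = (m : ℤ) by ring]
      push_cast
      simp
    have cA : ((1 : ℂ) + x) * (2 * ((m : ℂ) + 1) *
          ((Polynomial.Chebyshev.T ℝ ((m : ℤ) + 2)).eval x : ℝ)
        - 2 * ((m : ℂ) + 2) * ((Polynomial.Chebyshev.T ℝ ((m : ℤ) + 1)).eval x : ℝ))
        = ((m : ℂ) + 1) * ((Polynomial.Chebyshev.T ℝ ((m : ℤ) + 3)).eval x : ℝ)
          + (m : ℂ) * ((Polynomial.Chebyshev.T ℝ ((m : ℤ) + 2)).eval x : ℝ)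
          - ((m : ℂ) + 3) * ((Polynomial.Chebyshev.T ℝ ((m : ℤ) + 1)).eval x : ℝ)
          - ((m : ℂ) + 2) * ((Polynomial.Chebyshev.T ℝ ((m : ℤ))).eval x : ℝ) := by
      exact_mod_cast congrArg (Complex.ofReal) (chebA' (m : ℤ) x)
    have cB : ((1 : ℂ) + x) * (((Polynomial.Chebyshev.U ℝ ((m : ℤ) + 1)).eval x : ℝ)
          - ((Polynomial.Chebyshev.U ℝ ((m : ℤ))).eval x : ℝ))
        = ((Polynomial.Chebyshev.T ℝ ((m : ℤ) + 2)).eval x : ℝ)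
          + ((Polynomial.Chebyshev.T ℝ ((m : ℤ) + 1)).eval x : ℝ) := by
      exact_mod_cast congrArg (Complex.ofReal) (chebB' (m : ℤ) x)
    simp only [hfdef, hudef, hPw, hdT2, hdT1, Pi.mul_apply, Pi.sub_apply]
    push_cast at cA cB ⊢
    linear_combination (-(Complex.I * ω * Complex.exp (Complex.I * ω * x)) *
        (((1 + x) ^ (-α) : ℝ) : ℂ)) * cA -
      (2 * ((m : ℂ) + 1) * ((m : ℂ) + 2) * Complex.exp (Complex.I * ω * x) *
        (((1 + x) ^ (-α) : ℝ) : ℂ)) * cB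
  have hIntG : IntervalIntegrable (fun y =>
      Complex.I * ω * ((↑(m + 2) : ℂ) - 1) * f ((m : ℤ) + 3) y +
        (2 * ((↑(m + 2) : ℂ) - α + 1) * ((↑(m + 2) : ℂ) - 1) +
          Complex.I * ω * ((↑(m + 2) : ℂ) - 2)) * f ((m : ℤ) + 2) y +
        (2 * (↑(m + 2) : ℂ) * ((↑(m + 2) : ℂ) + α - 2) -
          Complex.I * ω * ((↑(m + 2) : ℂ) + 1)) * f ((m : ℤ) + 1) y -
        Complex.I * ω * (↑(m + 2) : ℂ) * f ((m : ℤ)) y) volume (-1) 1 :=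
    ((((hInt _).const_mul _).add ((hInt _).const_mul _)).add ((hInt _).const_mul _)).sub
      ((hInt _).const_mul _)
  rw [intervalIntegral.integral_eq_sub_of_hasDerivAt_of_le (by norm_num)
    hcF.continuousOn hderiv hIntG]
  -- evaluate the boundary terms
  have hu1 : u 1 = (2 : ℝ) ^ (1 - α) * (-2) := by
    simp only [hudef]
    rw [cheb_eval_one, cheb_eval_one]
    norm_num
    ring
  have hum1 : u (-1) = 0 := by
    simp only [hudef]
    norm_num
    rw [Real.zero_rpow (by linarith)]
    simp
  have h2exp : (2 : ℝ) ^ (2 - α) = 2 * (2 : ℝ) ^ (1 - α) := by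
    have h := Real.rpow_add (by norm_num : (0:ℝ) < 2) 1 (1 - α)
    rw [Real.rpow_one] at h
    rw [show (2 : ℝ) - α = 1 + (1 - α) by ring, h]
  simp only [hFdef, hu1, hum1, h2exp, Complex.ofReal_one, mul_one, Complex.ofReal_zero,
    zero_mul, sub_zero]
  push_cast
  ring
end

section
/- Let 0 ≤ α < 1 and ω̃ > 0, and for k ≥ 0 let Z_k = ∫_{−1}^{1} (1+y)^{−α}·T_k(y)·e^{iω̃y} dy, where T_k is the Chebyshev polynomial of the first kind. Then Z_0 = (e^{−iω̃}/ω̃^{1−α})·e^{iπ(1−α)/2}·γ(1−α, −2iω̃), Z_1 = (e^{−iω̃}/ω̃^{2−α})·e^{iπ(2−α)/2}·γ(2−α, −2iω̃) − Z_0, and Z_2 = (2e^{−iω̃}/ω̃^{3−α})·e^{iπ(3−α)/2}·γ(3−α, −2iω̃) − 4Z_1 − 3Z_0, where for Re a > 0 the lower incomplete Gamma function along the straight segment from 0 to z ∈ ℂ is γ(a, z) = ∫_0^1 z·(zs)^{a−1}·e^{−zs} ds (principal branch powers). -/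
open Filter MeasureTheory Set intervalIntegral

private lemma aux_mul_ofReal_cpow {x : ℂ} (hx : x ≠ 0) {r : ℝ} (hr : 0 < r) (c : ℂ) :
    (x * (r : ℂ)) ^ c = x ^ c * (r : ℂ) ^ c := by
  have hr' : (r : ℂ) ≠ 0 := by exact_mod_cast hr.ne'
  rw [Complex.cpow_def_of_ne_zero (mul_ne_zero hx hr'),
    Complex.cpow_def_of_ne_zero hx, Complex.cpow_def_of_ne_zero hr',
    Complex.log_mul_ofReal r hr x hx, add_mul, Complex.exp_add,
    ← Complex.ofReal_log hr.le, mul_comm]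

lemma aux_intInt (r : ℝ) (hr : -1 < r) {g : ℝ → ℂ} (hg : Continuous g) :
    IntervalIntegrable (fun y => ((((1 + y) ^ r : ℝ)) : ℂ) * g y) volume (-1) 1 := by
  have h1 : IntervalIntegrable (fun y : ℝ => (1 + y) ^ r) volume (-1) 1 := by
    have := (intervalIntegral.intervalIntegrable_rpow' (a := 0) (b := 2) hr).comp_add_left 1
    norm_num at this
    exact this
  have h2 : IntervalIntegrable (fun y : ℝ => ((((1 + y) ^ r : ℝ)) : ℂ)) volume (-1) 1 := by
    rw [intervalIntegrable_iff] at h1 ⊢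
    exact h1.ofReal
  exact h2.mul_continuousOn hg.continuousOn

private lemma aux_sub (ω : ℝ) (hω : 0 < ω) (r : ℝ) :
    (∫ s in (0:ℝ)..1, (-(2 * Complex.I * ω)) * ((-(2 * Complex.I * ω)) * (s:ℂ)) ^ (r:ℂ) *
        Complex.exp (-((-(2 * Complex.I * ω)) * (s:ℂ))))
      = (2 * ((-(Complex.I * ω)) ^ ((r:ℂ)+1) * Complex.exp (Complex.I * ω))) * (2⁻¹ : ℝ) •
        ∫ y in (-1:ℝ)..1, ((((1 + y) ^ r : ℝ)) : ℂ) * Complex.exp (Complex.I * ω * y) := by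
  set z : ℂ := -(2 * Complex.I * ω) with hzdef
  set w : ℂ := -(Complex.I * ω) with hwdef
  have hw : w ≠ 0 := by
    simp [hwdef, Complex.I_ne_zero, Complex.ext_iff, hω.ne']
  set f : ℝ → ℂ := fun y => z * (z * (((1 + y)/2 : ℝ):ℂ)) ^ (r:ℂ) *
      Complex.exp (-(z * (((1 + y)/2 : ℝ):ℂ))) with hf
  have step1 : (∫ s in (0:ℝ)..1, z * (z * (s:ℂ)) ^ (r:ℂ) * Complex.exp (-(z * (s:ℂ))))
      = ∫ s in (0:ℝ)..1, f (2 * s + (-1)) := by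
    apply intervalIntegral.integral_congr
    intro s _
    simp only [hf]
    rw [show (1 + (2 * s + (-1)))/2 = s by ring]
  have step2 : (∫ s in (0:ℝ)..1, f (2 * s + (-1)))
      = (2⁻¹ : ℝ) • ∫ y in (-1:ℝ)..1, f y := by
    rw [intervalIntegral.integral_comp_mul_add f two_ne_zero (-1)]
    norm_num
  have step3 : (∫ y in (-1:ℝ)..1, f y)
      = ∫ y in (-1:ℝ)..1, (2 * (w ^ ((r:ℂ)+1) * Complex.exp (Complex.I * ω))) *
          (((((1 + y) ^ r : ℝ)) : ℂ) * Complex.exp (Complex.I * ω * y)) := by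
    apply intervalIntegral.integral_congr_ae
    filter_upwards with y hy
    rw [Set.uIoc_of_le (by norm_num : (-1:ℝ) ≤ 1)] at hy
    have hy1 : 0 < 1 + y := by have := hy.1; linarith
    have h1 : z * (((1 + y)/2 : ℝ):ℂ) = w * ((1 + y : ℝ):ℂ) := by
      simp only [hzdef, hwdef]; push_cast; ring
    have h2 : (w * ((1 + y : ℝ):ℂ)) ^ (r:ℂ) = w ^ (r:ℂ) * ((((1 + y) ^ r : ℝ)) : ℂ) := by
      rw [aux_mul_ofReal_cpow hw hy1 (r:ℂ), Complex.ofReal_cpow hy1.le]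
    have h3 : Complex.exp (-(w * ((1 + y : ℝ):ℂ)))
        = Complex.exp (Complex.I * ω) * Complex.exp (Complex.I * ω * y) := by
      rw [← Complex.exp_add]
      congr 1
      simp only [hwdef]; push_cast; ring
    have h4 : w ^ ((r:ℂ)+1) = w ^ (r:ℂ) * w := by
      rw [Complex.cpow_add _ _ hw, Complex.cpow_one]
    simp only [hf]
    rw [h1, h2, h3, h4]
    simp only [hzdef, hwdef]
    push_cast
    ring
  rw [step1, step2, step3, intervalIntegral.integral_const_mul]
  simp only [Complex.real_smul]
  ring

private lemma aux_moment (ω : ℝ) (hω : 0 < ω) (r : ℝ) (hr : -1 < r) (G : ℂ → ℂ)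
    (hG : ∀ a : ℂ, 0 < a.re → G a = ∫ s in (0 : ℝ)..1,
      (-(2 * Complex.I * ω)) * ((-(2 * Complex.I * ω)) * s) ^ (a - 1) *
        Complex.exp (-((-(2 * Complex.I * ω)) * s))) :
    Complex.exp (-(Complex.I * ω)) / ((ω ^ (r+1) : ℝ) : ℂ) *
      Complex.exp (Real.pi * Complex.I * ((r:ℂ)+1) / 2) * G ((r:ℂ)+1)
      = ∫ y in (-1:ℝ)..1, ((((1 + y) ^ r : ℝ)) : ℂ) * Complex.exp (Complex.I * ω * y) := by
  have ha : (0:ℝ) < ((r:ℂ)+1).re := by simp; linarith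
  have hGa := hG ((r:ℂ)+1) ha
  rw [show ((r:ℂ)+1) - 1 = (r:ℂ) by ring] at hGa
  rw [hGa, aux_sub ω hω r]
  have hsplit : (-(Complex.I * (ω:ℂ))) ^ ((r:ℂ)+1)
      = Complex.exp (-(Real.pi/2 : ℝ) * Complex.I * ((r:ℂ)+1)) * ((ω ^ (r+1) : ℝ) : ℂ) := by
    rw [show -(Complex.I * (ω:ℂ)) = (-Complex.I) * ((ω:ℝ):ℂ) by ring]
    rw [aux_mul_ofReal_cpow (neg_ne_zero.mpr Complex.I_ne_zero) hω]
    rw [Complex.cpow_def_of_ne_zero (neg_ne_zero.mpr Complex.I_ne_zero), Complex.log_neg_I]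
    rw [show ((r:ℂ)+1) = (((r+1:ℝ)):ℂ) by push_cast; ring, ← Complex.ofReal_cpow hω.le]
    push_cast
    ring_nf
  rw [hsplit]
  simp only [Complex.real_smul]
  push_cast
  set M := ∫ (y : ℝ) in (-1:ℝ)..1, ((((1 + y) ^ r : ℝ)):ℂ) * Complex.exp (Complex.I * ↑ω * ↑y) with hM
  have hW : ((ω ^ (r+1) : ℝ) : ℂ) ≠ 0 := by
    exact_mod_cast (Real.rpow_pos_of_pos hω (r+1)).ne'
  have E1 : Complex.exp (-(Complex.I * (ω:ℂ))) * Complex.exp (Complex.I * (ω:ℂ)) = 1 := by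
    rw [← Complex.exp_add]; simp
  have E2 : Complex.exp ((Real.pi:ℂ) * Complex.I * ((r:ℂ) + 1) / 2) *
      Complex.exp (-((Real.pi:ℂ) / 2) * Complex.I * ((r:ℂ) + 1)) = 1 := by
    rw [← Complex.exp_add, show (Real.pi:ℂ) * Complex.I * ((r:ℂ) + 1) / 2 +
      -((Real.pi:ℂ) / 2) * Complex.I * ((r:ℂ) + 1) = 0 by ring, Complex.exp_zero]
  calc Complex.exp (-(Complex.I * (ω:ℂ))) / ((ω ^ (r+1) : ℝ) : ℂ) *
        Complex.exp ((Real.pi:ℂ) * Complex.I * ((r:ℂ) + 1) / 2) *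
      (2 * (Complex.exp (-((Real.pi:ℂ) / 2) * Complex.I * ((r:ℂ) + 1)) * ((ω ^ (r+1) : ℝ) : ℂ) *
          Complex.exp (Complex.I * (ω:ℂ))) * (2⁻¹ * M))
      = (Complex.exp (-(Complex.I * (ω:ℂ))) * Complex.exp (Complex.I * (ω:ℂ))) *
        (Complex.exp ((Real.pi:ℂ) * Complex.I * ((r:ℂ) + 1) / 2) *
          Complex.exp (-((Real.pi:ℂ) / 2) * Complex.I * ((r:ℂ) + 1))) *
        (((ω ^ (r+1) : ℝ) : ℂ) * ((ω ^ (r+1) : ℝ) : ℂ)⁻¹) * M := by ring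
    _ = M := by rw [E1, E2, mul_inv_cancel₀ hW]; ring

/-- Initial values of the Chebyshev moments Z₀, Z₁, Z₂ in terms of the lower
incomplete Gamma function γ(a, −2iω̃) taken along the straight segment from 0. -/
theorem chebyshev_moments_initial_values
    (α ω : ℝ) (hα0 : 0 ≤ α) (hα1 : α < 1) (hω : 0 < ω)
    (Z : ℕ → ℂ) (G : ℂ → ℂ)
    (hZ : ∀ k : ℕ, Z k = ∫ y in (-1 : ℝ)..1,
      (((1 + y) ^ (-α) : ℝ) : ℂ) *
        (((Polynomial.Chebyshev.T ℝ (k : ℤ)).eval y : ℝ) : ℂ) *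
        Complex.exp (Complex.I * ω * y))
    (hG : ∀ a : ℂ, 0 < a.re → G a = ∫ s in (0 : ℝ)..1,
      (-(2 * Complex.I * ω)) * ((-(2 * Complex.I * ω)) * s) ^ (a - 1) *
        Complex.exp (-((-(2 * Complex.I * ω)) * s))) :
    Z 0 = Complex.exp (-(Complex.I * ω)) / ((ω ^ (1 - α) : ℝ) : ℂ) *
        Complex.exp (Real.pi * Complex.I * (1 - α) / 2) * G (1 - α) ∧
    Z 1 = Complex.exp (-(Complex.I * ω)) / ((ω ^ (2 - α) : ℝ) : ℂ) *
        Complex.exp (Real.pi * Complex.I * (2 - α) / 2) * G (2 - α) - Z 0 ∧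
    Z 2 = 2 * Complex.exp (-(Complex.I * ω)) / ((ω ^ (3 - α) : ℝ) : ℂ) *
        Complex.exp (Real.pi * Complex.I * (3 - α) / 2) * G (3 - α) -
        4 * Z 1 - 3 * Z 0 := by
  have hcont : Continuous fun y : ℝ => Complex.exp (Complex.I * ω * y) := by
    fun_prop
  set M : ℝ → ℂ := fun r => ∫ y in (-1:ℝ)..1,
    ((((1 + y) ^ r : ℝ)) : ℂ) * Complex.exp (Complex.I * ω * y) with hMdef
  have h0 : (-1:ℝ) < -α := by linarith
  have h1 : (-1:ℝ) < 1 - α := by linarith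
  have h2 : (-1:ℝ) < 2 - α := by linarith
  have i0 := aux_intInt (-α) h0 hcont
  have i1 := aux_intInt (1-α) h1 hcont
  have i2 := aux_intInt (2-α) h2 hcont
  -- the moment identities
  have e0 := aux_moment ω hω (-α) h0 G hG
  rw [show ((-α:ℝ):ℂ) + 1 = 1 - (α:ℂ) by push_cast; ring,
      show (-α:ℝ) + 1 = 1 - α by ring] at e0
  have e1 := aux_moment ω hω (1-α) h1 G hG
  rw [show ((1-α:ℝ):ℂ) + 1 = 2 - (α:ℂ) by push_cast; ring,
      show (1-α:ℝ) + 1 = 2 - α by ring] at e1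
  have e2 := aux_moment ω hω (2-α) h2 G hG
  rw [show ((2-α:ℝ):ℂ) + 1 = 3 - (α:ℂ) by push_cast; ring,
      show (2-α:ℝ) + 1 = 3 - α by ring] at e2
  -- Z 0
  have hM0 : Z 0 = M (-α) := by
    rw [hZ 0, hMdef]
    apply intervalIntegral.integral_congr
    intro y _
    simp [Polynomial.Chebyshev.T_zero]
  -- Z 1
  have hM1 : Z 1 = M (1-α) - M (-α) := by
    rw [hZ 1]
    have hpt : (∫ y in (-1:ℝ)..1, (((1 + y) ^ (-α) : ℝ) : ℂ) *
        (((Polynomial.Chebyshev.T ℝ ((1:ℕ) : ℤ)).eval y : ℝ) : ℂ) *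
        Complex.exp (Complex.I * ω * y))
        = ∫ y in (-1:ℝ)..1,
          (((((1 + y) ^ (1-α) : ℝ)) : ℂ) * Complex.exp (Complex.I * ω * y)
            - ((((1 + y) ^ (-α) : ℝ)) : ℂ) * Complex.exp (Complex.I * ω * y)) := by
      apply intervalIntegral.integral_congr_ae
      filter_upwards with y hy
      rw [Set.uIoc_of_le (by norm_num : (-1:ℝ) ≤ 1)] at hy
      have hy1 : (0:ℝ) < 1 + y := by have := hy.1; linarith
      have hp : (1 + y) ^ (1-α) = (1 + y) ^ (-α) * (1 + y) := by
        rw [show (1-α:ℝ) = -α + 1 by ring, Real.rpow_add hy1, Real.rpow_one]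
      simp only [Nat.cast_one, Polynomial.Chebyshev.T_one, Polynomial.eval_X]
      rw [hp]
      push_cast
      ring
    rw [hpt, intervalIntegral.integral_sub i1 i0]
  -- Z 2
  have hM2 : Z 2 = 2 * M (2-α) - 4 * M (1-α) + M (-α) := by
    rw [hZ 2]
    have hpt : (∫ y in (-1:ℝ)..1, (((1 + y) ^ (-α) : ℝ) : ℂ) *
        (((Polynomial.Chebyshev.T ℝ ((2:ℕ) : ℤ)).eval y : ℝ) : ℂ) *
        Complex.exp (Complex.I * ω * y))
        = ∫ y in (-1:ℝ)..1,
          ((2 * (((((1 + y) ^ (2-α) : ℝ)) : ℂ) * Complex.exp (Complex.I * ω * y))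
            - 4 * (((((1 + y) ^ (1-α) : ℝ)) : ℂ) * Complex.exp (Complex.I * ω * y)))
            + ((((1 + y) ^ (-α) : ℝ)) : ℂ) * Complex.exp (Complex.I * ω * y)) := by
      apply intervalIntegral.integral_congr_ae
      filter_upwards with y hy
      rw [Set.uIoc_of_le (by norm_num : (-1:ℝ) ≤ 1)] at hy
      have hy1 : (0:ℝ) < 1 + y := by have := hy.1; linarith
      have hp : (1 + y) ^ (1-α) = (1 + y) ^ (-α) * (1 + y) := by
        rw [show (1-α:ℝ) = -α + 1 by ring, Real.rpow_add hy1, Real.rpow_one]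
      have hp2 : (1 + y) ^ (2-α) = (1 + y) ^ (-α) * ((1 + y) * (1 + y)) := by
        rw [show (2-α:ℝ) = -α + 1 + 1 by ring, Real.rpow_add hy1, Real.rpow_add hy1,
          Real.rpow_one]
        ring
      simp only [Nat.cast_ofNat, Polynomial.Chebyshev.T_two, Polynomial.eval_sub,
        Polynomial.eval_mul, Polynomial.eval_pow, Polynomial.eval_X, Polynomial.eval_one,
        Polynomial.eval_ofNat]
      rw [hp, hp2]
      push_cast
      ring
    rw [hpt, intervalIntegral.integral_add ((i2.const_mul 2).sub (i1.const_mul 4)) i0,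
      intervalIntegral.integral_sub (i2.const_mul 2) (i1.const_mul 4),
      intervalIntegral.integral_const_mul, intervalIntegral.integral_const_mul]
  have e0' : Complex.exp (-(Complex.I * ω)) / ((ω ^ (1 - α) : ℝ) : ℂ) *
      Complex.exp (Real.pi * Complex.I * (1 - (α:ℂ)) / 2) * G (1 - (α:ℂ)) = M (-α) := e0
  have e1' : Complex.exp (-(Complex.I * ω)) / ((ω ^ (2 - α) : ℝ) : ℂ) *
      Complex.exp (Real.pi * Complex.I * (2 - (α:ℂ)) / 2) * G (2 - (α:ℂ)) = M (1-α) := e1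
  have e2' : Complex.exp (-(Complex.I * ω)) / ((ω ^ (3 - α) : ℝ) : ℂ) *
      Complex.exp (Real.pi * Complex.I * (3 - (α:ℂ)) / 2) * G (3 - (α:ℂ)) = M (2-α) := e2
  refine ⟨by rw [hM0, ← e0'], by rw [hM1, hM0, ← e1', ← e0'], ?_⟩
  rw [hM2, hM1, hM0, ← e2', ← e1', ← e0']
  ring
end

section
/- Let ω̃ > 0 and for each integer l ≥ 0 let M_l = ∫_{−1}^{1} U_l(y)·e^{iω̃y} dy, where U_l is the degree-l Chebyshev polynomial of the second kind. Then M_0 = 2·sin(ω̃)/ω̃, M_1 = 4i·( sin(ω̃)/ω̃² − cos(ω̃)/ω̃ ), and for every integer l ≥ 2: M_l + (2l/(iω̃))·M_{l−1} − M_{l−2} = (2/(iω̃))·( e^{iω̃} − (−1)^l·e^{−iω̃} ). -/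
open Filter MeasureTheory Set intervalIntegral

private lemma hasDerivAt_cexp_mul (c : ℂ) (x : ℝ) :
    HasDerivAt (fun y : ℝ => Complex.exp (c * y)) (c * Complex.exp (c * x)) x := by
  have h : HasDerivAt (fun y : ℝ => Complex.exp (c * y)) (Complex.exp (c * x) * c) x := by
    apply (Complex.hasDerivAt_exp _).comp x
    simpa only [mul_one, id] using ((hasDerivAt_id (x : ℂ)).const_mul c).comp_ofReal
  simpa [mul_comm] using h

private lemma cont_poly_exp (ω : ℝ) (p : Polynomial ℝ) :
    Continuous fun x : ℝ => ((p.eval x : ℝ) : ℂ) * Complex.exp (Complex.I * ω * x) :=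
  (Complex.continuous_ofReal.comp p.continuous).mul
    (Complex.continuous_exp.comp (continuous_const.mul Complex.continuous_ofReal))

/-- Integration by parts for moments of polynomials against `exp (I ω y)`. -/
private lemma cheb_ibp (ω : ℝ) (p : Polynomial ℝ) :
    ∫ y in (-1:ℝ)..1, ((p.derivative.eval y : ℝ) : ℂ) * Complex.exp (Complex.I * ω * y)
      = ((p.eval 1 : ℝ) : ℂ) * Complex.exp (Complex.I * ω)
        - ((p.eval (-1) : ℝ) : ℂ) * Complex.exp (-(Complex.I * ω))
        - Complex.I * ω *
          ∫ y in (-1:ℝ)..1, ((p.eval y : ℝ) : ℂ) * Complex.exp (Complex.I * ω * y) := by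
  set c : ℂ := Complex.I * ω with hc
  have hu : ∀ x ∈ uIcc (-1:ℝ) 1, HasDerivAt (fun y : ℝ => ((p.eval y : ℝ) : ℂ))
      ((p.derivative.eval x : ℝ) : ℂ) x := fun x _ => (p.hasDerivAt x).ofReal_comp
  have hv : ∀ x ∈ uIcc (-1:ℝ) 1, HasDerivAt (fun y : ℝ => Complex.exp (c * y))
      (c * Complex.exp (c * x)) x := fun x _ => hasDerivAt_cexp_mul c x
  have hiu : IntervalIntegrable (fun x : ℝ => ((p.derivative.eval x : ℝ) : ℂ))
      volume (-1) 1 :=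
    (Complex.continuous_ofReal.comp p.derivative.continuous).intervalIntegrable _ _
  have hce : Continuous fun x : ℝ => Complex.exp (c * x) :=
    Complex.continuous_exp.comp (continuous_const.mul Complex.continuous_ofReal)
  have hiv : IntervalIntegrable (fun x : ℝ => c * Complex.exp (c * x))
      volume (-1) 1 := (continuous_const.mul hce).intervalIntegrable _ _
  have H := intervalIntegral.integral_deriv_mul_eq_sub hu hv hiu hiv
  have hsplit : (∫ y in (-1:ℝ)..1,
        (((p.derivative.eval y : ℝ) : ℂ) * Complex.exp (c * y)
          + ((p.eval y : ℝ) : ℂ) * (c * Complex.exp (c * y))))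
      = (∫ y in (-1:ℝ)..1, ((p.derivative.eval y : ℝ) : ℂ) * Complex.exp (c * y))
        + ∫ y in (-1:ℝ)..1, ((p.eval y : ℝ) : ℂ) * (c * Complex.exp (c * y)) := by
    apply intervalIntegral.integral_add
    · exact (cont_poly_exp ω p.derivative).intervalIntegrable _ _
    · exact ((Complex.continuous_ofReal.comp p.continuous).mul
        (continuous_const.mul hce)).intervalIntegrable _ _
  have hconst : (∫ y in (-1:ℝ)..1, ((p.eval y : ℝ) : ℂ) * (c * Complex.exp (c * y)))
      = c * ∫ y in (-1:ℝ)..1, ((p.eval y : ℝ) : ℂ) * Complex.exp (c * y) := by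
    rw [← intervalIntegral.integral_const_mul]
    congr 1; funext y; ring
  rw [hsplit, hconst] at H
  simp only [Complex.ofReal_one, Complex.ofReal_neg, mul_one, mul_neg] at H
  linear_combination H

/-- Three-term recurrence (3.25) with initial values for the moments
M_l = ∫_{−1}^1 U_l(y) e^{iω̃y} dy of Chebyshev polynomials of the second kind. -/
theorem chebyshev_U_moments_recurrence
    (ω : ℝ) (hω : 0 < ω)
    (M : ℕ → ℂ)
    (hM : ∀ l : ℕ, M l = ∫ y in (-1 : ℝ)..1,
      (((Polynomial.Chebyshev.U ℝ (l : ℤ)).eval y : ℝ) : ℂ) *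
        Complex.exp (Complex.I * ω * y)) :
    M 0 = 2 * Real.sin ω / ω ∧
    M 1 = 4 * Complex.I * (((Real.sin ω / ω ^ 2 : ℝ) : ℂ) - ((Real.cos ω / ω : ℝ) : ℂ)) ∧
    ∀ l : ℕ, 2 ≤ l →
      M l + 2 * (l : ℂ) / (Complex.I * ω) * M (l - 1) - M (l - 2) =
        2 / (Complex.I * ω) *
          (Complex.exp (Complex.I * ω) - (-1 : ℂ) ^ l * Complex.exp (-(Complex.I * ω))) := by
  have hω' : (ω : ℂ) ≠ 0 := by exact_mod_cast hω.ne'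
  have hc : Complex.I * ω ≠ 0 := mul_ne_zero Complex.I_ne_zero hω'
  have hexp1 : Complex.exp (Complex.I * ω) = (Real.cos ω : ℂ) + (Real.sin ω : ℂ) * Complex.I := by
    rw [mul_comm, Complex.exp_mul_I, Complex.ofReal_cos, Complex.ofReal_sin]
  have hexp2 : Complex.exp (-(Complex.I * ω))
      = (Real.cos ω : ℂ) - (Real.sin ω : ℂ) * Complex.I := by
    rw [mul_comm, ← neg_mul, Complex.exp_mul_I, Complex.cos_neg, Complex.sin_neg,
      Complex.ofReal_cos, Complex.ofReal_sin]
    ring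
  have hsum : Complex.exp (Complex.I * ω) + Complex.exp (-(Complex.I * ω))
      = 2 * (Real.cos ω : ℂ) := by rw [hexp1, hexp2]; ring
  have hdiff : Complex.exp (Complex.I * ω) - Complex.exp (-(Complex.I * ω))
      = 2 * (Real.sin ω : ℂ) * Complex.I := by rw [hexp1, hexp2]; ring
  have hIcancel : ∀ s : ℂ, 2 * s * Complex.I / (Complex.I * ω) = 2 * s / ω := by
    intro s
    rw [mul_comm (2 * s) Complex.I, mul_div_mul_left _ _ Complex.I_ne_zero]
  have hdiv : ∀ z : ℂ, z / (Complex.I * ω) = -Complex.I * z / ω := by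
    intro z
    rw [div_eq_div_iff hc hω']
    linear_combination (z * ω) * Complex.I_sq
  -- the basic exponential integral
  have hbase : (∫ y in (-1:ℝ)..1, Complex.exp (Complex.I * ω * y))
      = (Complex.exp (Complex.I * ω) - Complex.exp (-(Complex.I * ω))) / (Complex.I * ω) := by
    rw [integral_exp_mul_complex hc]
    norm_num
  have hM0 : M 0 = 2 * Real.sin ω / ω := by
    rw [hM 0]
    have h0 : ∀ y : ℝ, (((Polynomial.Chebyshev.U ℝ ((0:ℕ) : ℤ)).eval y : ℝ) : ℂ)
        * Complex.exp (Complex.I * ω * y) = Complex.exp (Complex.I * ω * y) := by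
      intro y; simp [Polynomial.Chebyshev.U_zero]
    rw [intervalIntegral.integral_congr (fun y _ => h0 y), hbase, hdiff, hIcancel]
  refine ⟨hM0, ?_, ?_⟩
  · -- M 1 : integrate by parts with p = X
    have H := cheb_ibp ω (Polynomial.X : Polynomial ℝ)
    simp only [Polynomial.derivative_X, Polynomial.eval_one, Polynomial.eval_X] at H
    simp only [Complex.ofReal_one, Complex.ofReal_neg, one_mul, neg_mul, neg_one_mul] at H
    have hM1 : M 1 = 2 * ∫ y in (-1:ℝ)..1, ((y:ℝ):ℂ) * Complex.exp (Complex.I * ω * y) := by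
      rw [hM 1, ← intervalIntegral.integral_const_mul]
      apply intervalIntegral.integral_congr
      intro y _
      simp [Polynomial.Chebyshev.U_one]
      ring
    rw [hbase] at H
    have hJ : (∫ y in (-1:ℝ)..1, ((y:ℝ):ℂ) * Complex.exp (Complex.I * ω * y))
        = (Complex.exp (Complex.I * ω) + Complex.exp (-(Complex.I * ω))
            - (Complex.exp (Complex.I * ω) - Complex.exp (-(Complex.I * ω))) / (Complex.I * ω))
          / (Complex.I * ω) := by
      field_simp at H ⊢
      linear_combination H
    rw [hM1, hJ, hsum, hdiff, hIcancel, hdiv]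
    push_cast
    field_simp
    ring
  · -- recurrence
    intro l hl
    set n : ℤ := (l : ℤ) with hn
    have H := cheb_ibp ω (Polynomial.Chebyshev.T ℝ n)
    have hT1 : (Polynomial.Chebyshev.T ℝ n).eval 1 = 1 := by
      have := Polynomial.Chebyshev.T_real_cos (θ := 0) (n := n)
      simpa using this
    have hTm1 : (Polynomial.Chebyshev.T ℝ n).eval (-1) = (-1 : ℝ) ^ l := by
      have h := Polynomial.Chebyshev.T_real_cos (θ := Real.pi) (n := n)
      rw [Real.cos_pi] at h
      rw [h]
      have h2 := Real.cos_int_mul_pi_sub 0 n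
      simp only [sub_zero, Real.cos_zero, mul_one] at h2
      rw [h2, hn, zpow_natCast]
    have hder : ∀ y : ℝ, (Polynomial.derivative (Polynomial.Chebyshev.T ℝ n)).eval y
        = (l : ℝ) * (Polynomial.Chebyshev.U ℝ (n - 1)).eval y := by
      intro y
      rw [Polynomial.Chebyshev.T_derivative_eq_U]
      push_cast [hn]
      simp
    have hlhs : (∫ y in (-1:ℝ)..1,
          (((Polynomial.derivative (Polynomial.Chebyshev.T ℝ n)).eval y : ℝ) : ℂ)
            * Complex.exp (Complex.I * ω * y)) = (l : ℂ) * M (l - 1) := by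
      have hcast : ((l - 1 : ℕ) : ℤ) = n - 1 := by omega
      rw [hM (l - 1), hcast, ← intervalIntegral.integral_const_mul]
      apply intervalIntegral.integral_congr
      intro y _
      simp only [hder]
      push_cast
      ring
    have hT : (2 : Polynomial ℝ) * Polynomial.Chebyshev.T ℝ n
        = Polynomial.Chebyshev.U ℝ n - Polynomial.Chebyshev.U ℝ (n - 2) := by
      have h1 := Polynomial.Chebyshev.T_eq_U_sub_X_mul_U ℝ n
      have h2 := Polynomial.Chebyshev.U_sub_two ℝ n
      linear_combination 2 * h1 + h2
    have hTint : M l - M (l - 2)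
        = 2 * ∫ y in (-1:ℝ)..1, (((Polynomial.Chebyshev.T ℝ n).eval y : ℝ) : ℂ)
            * Complex.exp (Complex.I * ω * y) := by
      have hcast2 : ((l - 2 : ℕ) : ℤ) = n - 2 := by omega
      rw [hM l, hM (l - 2), hcast2, ← intervalIntegral.integral_const_mul,
        ← intervalIntegral.integral_sub
          ((cont_poly_exp ω _).intervalIntegrable _ _)
          ((cont_poly_exp ω _).intervalIntegrable _ _)]
      apply intervalIntegral.integral_congr
      intro y _
      have hev : (Polynomial.Chebyshev.U ℝ n).eval y - (Polynomial.Chebyshev.U ℝ (n - 2)).eval y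
          = 2 * (Polynomial.Chebyshev.T ℝ n).eval y := by
        have := congrArg (Polynomial.eval y) hT
        simp only [Polynomial.eval_mul, Polynomial.eval_ofNat, Polynomial.eval_sub] at this
        linarith [this]
      have hev' : (((Polynomial.Chebyshev.U ℝ n).eval y : ℝ) : ℂ)
          - (((Polynomial.Chebyshev.U ℝ (n - 2)).eval y : ℝ) : ℂ)
          = 2 * (((Polynomial.Chebyshev.T ℝ n).eval y : ℝ) : ℂ) := by
        exact_mod_cast congrArg (fun t : ℝ => (t : ℂ)) hev
      simp only [hn]
      linear_combination Complex.exp (Complex.I * ω * y) * hev'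
    have hIT : (∫ y in (-1:ℝ)..1, (((Polynomial.Chebyshev.T ℝ n).eval y : ℝ) : ℂ)
            * Complex.exp (Complex.I * ω * y)) = (M l - M (l - 2)) / 2 := by
      rw [hTint]; ring
    rw [hlhs, hT1, hTm1, hIT] at H
    push_cast at H
    field_simp
    linear_combination 2 * H
end

section
/- Let N ≥ 1 be an integer, let a_0, a_1, …, a_N be complex numbers, let τ ∈ ℂ, and let p(y) = (a_0/2)·T_0(y) + Σ_{k=1}^{N−1} a_k·T_k(y) + (a_N/2)·T_N(y). Define b_N = 0, b_{N−1} = a_N, and b_{k−1} = 2a_k + 2τ·b_k − b_{k+1} for k = N−1, N−2, …, 1. Then, as an identity of polynomials in y, p(y) − p(τ) = (y − τ)·( (b_0/2)·T_0(y) + Σ_{k=1}^{N−1} b_k·T_k(y) ). -/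
open Polynomial

lemma cheb_aux_C2 (x : ℂ) : (Polynomial.C (2 * x) : Polynomial ℂ) = 2 * Polynomial.C x := by
  rw [Polynomial.C_mul, map_ofNat]

/-- The Hasegawa–Torii coefficient identity (3.14)–(3.15): the Chebyshev coefficients
of the divided difference (p(y) − p(τ))/(y − τ) are computed by a backward
three-term recurrence. -/
theorem chebyshev_divided_difference_recurrence
    (N : ℕ) (hN : 1 ≤ N) (a : ℕ → ℂ) (τ : ℂ) (b : ℕ → ℂ) (p : Polynomial ℂ)
    (hp : p = Polynomial.C (a 0 / 2) * Polynomial.Chebyshev.T ℂ 0 +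
      (∑ k ∈ Finset.Icc 1 (N - 1), Polynomial.C (a k) * Polynomial.Chebyshev.T ℂ (k : ℤ)) +
      Polynomial.C (a N / 2) * Polynomial.Chebyshev.T ℂ (N : ℤ))
    (hbN : b N = 0) (hbN1 : b (N - 1) = a N)
    (hb : ∀ k : ℕ, 1 ≤ k → k ≤ N - 1 →
      b (k - 1) = 2 * a k + 2 * τ * b k - b (k + 1)) :
    p - Polynomial.C (p.eval τ) =
      (Polynomial.X - Polynomial.C τ) *
        (Polynomial.C (b 0 / 2) * Polynomial.Chebyshev.T ℂ 0 +
          ∑ k ∈ Finset.Icc 1 (N - 1), Polynomial.C (b k) * Polynomial.Chebyshev.T ℂ (k : ℤ)) := by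
  obtain ⟨M, rfl⟩ : ∃ M, N = M + 1 := ⟨N - 1, (Nat.succ_pred_eq_of_pos hN).symm⟩
  simp only [Nat.add_sub_cancel] at hp hbN1 hb ⊢
  set q : Polynomial ℂ := Polynomial.C (b 0 / 2) * Polynomial.Chebyshev.T ℂ 0 +
      ∑ k ∈ Finset.Icc 1 M, Polynomial.C (b k) * Polynomial.Chebyshev.T ℂ (k : ℤ) with hq
  set g : ℕ → Polynomial ℂ := fun k =>
      Polynomial.C (b k) * Polynomial.Chebyshev.T ℂ ((k : ℤ) + 1)
      - Polynomial.C (b (k + 1)) * Polynomial.Chebyshev.T ℂ (k : ℤ) with hg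
  have hsum : ∀ m, m ≤ M →
      (X - Polynomial.C τ) * (∑ k ∈ Finset.Icc 1 m,
        Polynomial.C (b k) * Polynomial.Chebyshev.T ℂ (k : ℤ)) * 2
      = (∑ k ∈ Finset.Icc 1 m, Polynomial.C (2 * a k) * Polynomial.Chebyshev.T ℂ (k : ℤ))
        + g m - g 0 := by
    intro m hm
    induction m with
    | zero => simp
    | succ n ih =>
      rw [Finset.sum_Icc_succ_top (Nat.le_add_left 1 n),
        Finset.sum_Icc_succ_top (Nat.le_add_left 1 n)]
      have hrec := hb (n + 1) (Nat.le_add_left 1 n) hm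
      simp only [Nat.add_sub_cancel] at hrec
      have hT : Polynomial.Chebyshev.T ℂ ((n:ℤ)+1+1)
          = 2*X*Polynomial.Chebyshev.T ℂ ((n:ℤ)+1) - Polynomial.Chebyshev.T ℂ n :=
        Polynomial.Chebyshev.T_add_two ℂ (n:ℤ)
      have ih' := ih (le_of_lt hm)
      have hcb : Polynomial.C (b n) = 2 * Polynomial.C (a (n+1))
          + 2 * Polynomial.C τ * Polynomial.C (b (n+1)) - Polynomial.C (b (n+1+1)) := by
        rw [hrec]
        simp only [Polynomial.C_add, Polynomial.C_sub, Polynomial.C_mul, map_ofNat]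
      have hterm : (X - Polynomial.C τ) *
          (Polynomial.C (b (n+1)) * Polynomial.Chebyshev.T ℂ ((n+1 : ℕ) : ℤ)) * 2
          = Polynomial.C (2 * a (n+1)) * Polynomial.Chebyshev.T ℂ ((n+1 : ℕ) : ℤ)
            + g (n+1) - g n := by
        simp only [hg]
        push_cast
        rw [hT, hcb, cheb_aux_C2]
        ring
      rw [mul_add, add_mul, ih']
      linear_combination hterm
  have key : (X - Polynomial.C τ) * q * 2 = p * 2 - Polynomial.C (a 0 + τ * b 0 - b 1) := by
    rw [hq, hp]
    have h0 := hsum M le_rfl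
    have hgM : g M = Polynomial.C (a (M+1)) * Polynomial.Chebyshev.T ℂ ((M:ℤ)+1) := by
      simp [hg, hbN1, hbN]
    have hg0 : g 0 = Polynomial.C (b 0) * X - Polynomial.C (b 1) := by
      simp [hg, Polynomial.Chebyshev.T_one, Polynomial.Chebyshev.T_zero]
    have h2a : ∑ k ∈ Finset.Icc 1 M, Polynomial.C (2 * a k) * Polynomial.Chebyshev.T ℂ (k : ℤ)
        = (∑ k ∈ Finset.Icc 1 M, Polynomial.C (a k) * Polynomial.Chebyshev.T ℂ (k : ℤ)) * 2 := by
      rw [Finset.sum_mul]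
      refine Finset.sum_congr rfl fun k _ => ?_
      rw [cheb_aux_C2]; ring
    have hcb0 : Polynomial.C (b 0 / 2) * 2 = Polynomial.C (b 0) := by
      rw [(map_ofNat Polynomial.C 2).symm, ← Polynomial.C_mul]
      norm_num
    have hca0 : Polynomial.C (a 0 / 2) * 2 = Polynomial.C (a 0) := by
      rw [(map_ofNat Polynomial.C 2).symm, ← Polynomial.C_mul]
      norm_num
    have hcaM : Polynomial.C (a (M+1) / 2) * 2 = Polynomial.C (a (M+1)) := by
      rw [(map_ofNat Polynomial.C 2).symm, ← Polynomial.C_mul]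
      norm_num
    have hsub : Polynomial.C (a 0 + τ * b 0 - b 1)
        = Polynomial.C (a 0) + Polynomial.C τ * Polynomial.C (b 0) - Polynomial.C (b 1) := by
      simp [Polynomial.C_add, Polynomial.C_sub, Polynomial.C_mul]
    rw [mul_add, add_mul, h0, hgM, hg0, Polynomial.Chebyshev.T_zero]
    push_cast
    linear_combination h2a + (X - Polynomial.C τ) * hcb0 - hca0
      - Polynomial.Chebyshev.T ℂ ((M:ℤ)+1) * hcaM + hsub
  have h2 : (X - Polynomial.C τ) * q = p - Polynomial.C ((a 0 + τ * b 0 - b 1)/2) := by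
    have h2ne : (2 : Polynomial ℂ) ≠ 0 := two_ne_zero
    apply mul_right_cancel₀ h2ne
    rw [key, sub_mul]
    congr 1
    rw [(map_ofNat Polynomial.C 2).symm, ← Polynomial.C_mul]
    norm_num
  have hpe : p.eval τ = (a 0 + τ * b 0 - b 1)/2 := by
    have h3 := congrArg (Polynomial.eval τ) h2
    simp at h3
    linear_combination -h3
  rw [hpe]
  exact h2.symm
end
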